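/- arXiv:2406.13546 — 3 statements merged into one kernel-verified Lean document; each statement's English description precedes it below -/
import Mathlib

section
/- Let W be a Weyl group, S, T ⊆ Φ, and let W_{S,T} denote the set of minimal length double coset representatives in W(S)\W/W(T). The map Ω : W_{S,T} → W_{S,θ(T)} sending u to the minimal length representative of W(S)·u·w_{o,T}·W(θ(T)) is a bijection that reverses the Bruhat order: u ≤ u' implies Ω(u) ≥ Ω(u'). -/
/-- Bruhat order: `v ≤ w` iff some reduced word for `w` has a subword whose product is `v`. -/
def BruhatLE {B W : Type*} [Group W] {M : CoxeterMatrix B} (cs : CoxeterSystem M W)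
    (v w : W) : Prop :=
  ∃ l : List B, cs.IsReduced l ∧ cs.wordProd l = w ∧
    ∃ l' : List B, l'.Sublist l ∧ cs.wordProd l' = v

/-- The standard parabolic subgroup `W(S)` generated by the simple reflections in `S`. -/
def WPar {B W : Type*} [Group W] {M : CoxeterMatrix B} (cs : CoxeterSystem M W)
    (S : Set B) : Subgroup W :=
  Subgroup.closure (cs.simple '' S)

/-- `r` is a minimal length representative of the double coset `W(S)·w·W(T)`. -/
def IsMinDoubleCosetRep {B W : Type*} [Group W] {M : CoxeterMatrix B} (cs : CoxeterSystem M W)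
    (S T : Set B) (w r : W) : Prop :=
  (∃ x ∈ WPar cs S, ∃ y ∈ WPar cs T, r = x * w * y) ∧
    ∀ v : W, (∃ x ∈ WPar cs S, ∃ y ∈ WPar cs T, v = x * w * y) →
      cs.length r ≤ cs.length v

/-- `W_{S,T}`, the set of minimal length double coset representatives in `W(S)\W/W(T)`. -/
def WST {B W : Type*} [Group W] {M : CoxeterMatrix B} (cs : CoxeterSystem M W)
    (S T : Set B) : Set W :=
  {u | IsMinDoubleCosetRep cs S T u u}

open List

namespace CoxBruhat


section Dihedral

variable {W : Type*} [Group W] {a b : W}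

lemma dih_inv (ha : a * a = 1) : a⁻¹ = a := by
  rw [← mul_one a⁻¹, ← ha, ← mul_assoc, inv_mul_cancel, one_mul]

lemma dih_semiconj (ha : a * a = 1) (hb : b * b = 1) (n : ℕ) :
    b * (a * b) ^ n = (b * a) ^ n * b := by
  induction n with
  | zero => simp
  | succ n ih =>
    rw [pow_succ', ← mul_assoc, show b * (a * b) = (b * a) * b by group, mul_assoc, ih,
      ← mul_assoc, ← pow_succ']

lemma dih_pow_inv (ha : a * a = 1) (hb : b * b = 1) (n : ℕ) :
    ((a * b) ^ n)⁻¹ = (b * a) ^ n := by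
  rw [← inv_pow]
  congr 1
  rw [mul_inv_rev, dih_inv ha, dih_inv hb]

lemma dih_conj1 (ha : a * a = 1) (hb : b * b = 1) (n : ℕ) :
    ((a * b) ^ n)⁻¹ * b * (a * b) ^ n = (b * a) ^ (2 * n) * b := by
  rw [dih_pow_inv ha hb, mul_assoc, dih_semiconj ha hb, two_mul, pow_add, ← mul_assoc]

lemma dih_conj2 (ha : a * a = 1) (hb : b * b = 1) (n : ℕ) :
    ((a * b) ^ n)⁻¹ * (b * a * b) * (a * b) ^ n = (b * a) ^ (2 * n + 1) * b := by
  rw [dih_pow_inv ha hb, show (b*a)^n * (b*a*b) = (b*a)^(n+1) * b by rw [pow_succ]; group,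
    mul_assoc, dih_semiconj ha hb, two_mul, pow_add, pow_add]
  group

end Dihedral

variable {B W : Type*} [Group W] {M : CoxeterMatrix B} (cs : CoxeterSystem M W)

local prefix:100 "σ" => cs.simple
local prefix:100 "π" => cs.wordProd
local prefix:100 "ℓ" => cs.length

open Classical in
/-- indicator -/
noncomputable def ind (x t : W) : ZMod 2 := if x = t then 1 else 0

lemma ind_eq_one {x t : W} (h : x = t) : ind x t = 1 := by simp [ind, h]
lemma ind_eq_zero {x t : W} (h : x ≠ t) : ind x t = 0 := by simp [ind, h]

lemma ind_congr {x x' t t' : W} (h : x = t ↔ x' = t') : ind x t = ind x' t' := by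
  rcases eq_or_ne x t with h1 | h1
  · rw [ind_eq_one h1, ind_eq_one (h.mp h1)]
  · rw [ind_eq_zero h1, ind_eq_zero (fun hc => h1 (h.mpr hc))]

lemma zmod2_add_self (c : ZMod 2) : c + c = 0 := by revert c; decide

lemma zmod2_eq_of_add_eq_zero {b c : ZMod 2} (h : b + c = 0) : b = c := by revert b c; decide

lemma zmod2_ne_zero {c : ZMod 2} (h : c ≠ 0) : c = 1 := by revert c; decide

/-- raw involution on W × ZMod 2 -/
noncomputable def rawSigma (i : B) : W × ZMod 2 → W × ZMod 2 :=
  fun p => (σ i * p.1 * σ i, p.2 + ind p.1 (σ i))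

lemma conj_eq_iff {a x t : W} (ha : a * a = 1) : a * x * a = t ↔ x = a * t * a := by
  constructor
  · intro h
    rw [← h, show a * (a * x * a) * a = (a*a) * x * (a*a) by group, ha, one_mul, mul_one]
  · intro h
    rw [h, show a * (a * t * a) * a = (a*a) * t * (a*a) by group, ha, one_mul, mul_one]

lemma rawSigma_involutive (i : B) : Function.Involutive (rawSigma cs i) := by
  intro ⟨x, e⟩
  have hs := cs.simple_mul_simple_self i
  simp only [rawSigma]
  refine Prod.ext ?_ ?_
  · show σ i * (σ i * x * σ i) * σ i = x
    rw [show σ i * (σ i * x * σ i) * σ i = (σ i * σ i) * x * (σ i * σ i) by group, hs,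
      one_mul, mul_one]
  · show (e + ind x (σ i)) + ind (σ i * x * σ i) (σ i) = e
    have : ind (σ i * x * σ i) (σ i) = ind x (σ i) := by
      refine ind_congr ?_
      rw [conj_eq_iff hs, show σ i * σ i * σ i = (σ i * σ i) * σ i from rfl, hs, one_mul]
    rw [this, add_assoc, zmod2_add_self, add_zero]

/-- the permutation -/
noncomputable def sigmaPerm (i : B) : Equiv.Perm (W × ZMod 2) :=
  (rawSigma_involutive cs i).toPerm

lemma sigmaPerm_apply (i : B) (x : W) (e : ZMod 2) :
    sigmaPerm cs i (x, e) = (σ i * x * σ i, e + ind x (σ i)) := rfl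

lemma sigma_pow_apply (i j : B) (n : ℕ) (x : W) (e : ZMod 2) :
    ((sigmaPerm cs i * sigmaPerm cs j) ^ n) (x, e) =
      ((σ i * σ j) ^ n * x * ((σ i * σ j) ^ n)⁻¹,
        e + ∑ l ∈ Finset.range (2 * n), ind x ((σ j * σ i) ^ l * σ j)) := by
  have hi := cs.simple_mul_simple_self i
  have hj := cs.simple_mul_simple_self j
  induction n generalizing e with
  | zero => simp
  | succ n ih =>
    rw [pow_succ']
    have happ : ∀ p : W × ZMod 2,
        (sigmaPerm cs i * sigmaPerm cs j * (sigmaPerm cs i * sigmaPerm cs j) ^ n) p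
        = sigmaPerm cs i (sigmaPerm cs j (((sigmaPerm cs i * sigmaPerm cs j) ^ n) p)) := by
      intro p; rfl
    rw [happ, ih]
    set p := (σ i * σ j) ^ n with hp
    rw [sigmaPerm_apply, sigmaPerm_apply]
    have hconj : ∀ t : W, p * x * p⁻¹ = t ↔ x = p⁻¹ * t * p := by
      intro t
      constructor
      · intro h; rw [← h]; group
      · intro h; rw [h]; group
    refine Prod.ext ?_ ?_
    · show σ i * (σ j * (p * x * p⁻¹) * σ j) * σ i = (σ i * σ j) ^ (n+1) * x * ((σ i * σ j) ^ (n+1))⁻¹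
      rw [pow_succ', mul_inv_rev, ← hp]
      rw [mul_inv_rev, dih_inv hi, dih_inv hj]
      group
    · show (e + _) + ind (p * x * p⁻¹) (σ j) + ind (σ j * (p * x * p⁻¹) * σ j) (σ i) = e + _
      have h1 : ind (p * x * p⁻¹) (σ j) = ind x ((σ j * σ i) ^ (2*n) * σ j) := by
        refine ind_congr ?_
        rw [hconj, hp, dih_conj1 hi hj]
      have h2 : ind (σ j * (p * x * p⁻¹) * σ j) (σ i) = ind x ((σ j * σ i) ^ (2*n+1) * σ j) := by
        refine ind_congr ?_
        rw [conj_eq_iff hj, hconj, hp, dih_conj2 hi hj]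
      rw [h1, h2, show 2*(n+1) = 2*n+1+1 by ring, Finset.sum_range_succ, Finset.sum_range_succ]
      abel

lemma sigma_liftable : M.IsLiftable (fun i => sigmaPerm cs i) := by
  intro i j
  apply Equiv.ext
  rintro ⟨x, e⟩
  rw [sigma_pow_apply, cs.simple_mul_simple_pow i j, Equiv.Perm.one_apply]
  refine Prod.ext ?_ ?_
  · show (1:W) * x * (1:W)⁻¹ = x
    simp
  show e + ∑ l ∈ Finset.range (2 * M i j), ind x ((σ j * σ i) ^ l * σ j) = e
  have hsum : ∑ l ∈ Finset.range (2 * M i j), ind x ((σ j * σ i) ^ l * σ j) = 0 := by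
    rw [two_mul, Finset.sum_range_add]
    have : ∀ l, ind x ((σ j * σ i) ^ (M i j + l) * σ j) = ind x ((σ j * σ i) ^ l * σ j) := by
      intro l
      refine ind_congr ?_
      rw [pow_add, cs.simple_mul_simple_pow' i j, one_mul]
    rw [Finset.sum_congr rfl (fun l _ => this l), ← Finset.sum_add_distrib]
    rw [Finset.sum_congr rfl (fun l _ => zmod2_add_self _), Finset.sum_const_zero]
  rw [hsum, add_zero]

noncomputable def rho : W →* Equiv.Perm (W × ZMod 2) :=
  cs.lift ⟨fun i => sigmaPerm cs i, sigma_liftable cs⟩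

lemma rho_simple (i : B) : rho cs (σ i) = sigmaPerm cs i := cs.lift_apply_simple _ i

/-- count mod 2 -/
noncomputable def cnt (x : W) (l : List W) : ZMod 2 := (l.map (ind x)).sum

lemma cnt_nil (x : W) : cnt x [] = 0 := rfl
lemma cnt_cons (x t : W) (l : List W) : cnt x (t :: l) = ind x t + cnt x l := by simp [cnt]

lemma cnt_eq_zero_of_not_mem {x : W} {l : List W} (h : x ∉ l) : cnt x l = 0 := by
  induction l with
  | nil => rfl
  | cons t l ih =>
    rw [cnt_cons, ind_eq_zero (by simp at h; exact h.1), ih (by simp at h; exact h.2), add_zero]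

lemma mem_of_cnt_ne_zero {x : W} {l : List W} (h : cnt x l ≠ 0) : x ∈ l := by
  by_contra hc; exact h (cnt_eq_zero_of_not_mem hc)

lemma conj_eq_iff' {a x t : W} : a * x * a⁻¹ = t ↔ x = a⁻¹ * t * a := by
  constructor
  · intro h; rw [← h]; group
  · intro h; rw [h]; group

lemma rho_wordProd (ω : List B) (x : W) (e : ZMod 2) :
    rho cs (π ω) (x, e) = (π ω * x * (π ω)⁻¹, e + cnt x (cs.rightInvSeq ω)) := by
  induction ω generalizing e with
  | nil => simp [cnt_nil]
  | cons i ω ih =>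
    rw [cs.wordProd_cons, map_mul, Equiv.Perm.mul_apply, ih, rho_simple, sigmaPerm_apply]
    have hris : cs.rightInvSeq (i :: ω) = ((π ω)⁻¹ * σ i * π ω) :: cs.rightInvSeq ω := rfl
    refine Prod.ext ?_ ?_
    · show σ i * (π ω * x * (π ω)⁻¹) * σ i = _
      simp only [mul_inv_rev, cs.inv_simple]
      group
    · show e + cnt x (cs.rightInvSeq ω) + ind (π ω * x * (π ω)⁻¹) (σ i) = _
      rw [hris, cnt_cons, ind_congr (conj_eq_iff' (a := π ω) (x := x) (t := σ i))]
      ring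

/-- the parity invariant -/
noncomputable def Ff (w x : W) : ZMod 2 := ((rho cs w) (x, 0)).2

lemma Ff_wordProd (ω : List B) (x : W) : Ff cs (π ω) x = cnt x (cs.rightInvSeq ω) := by
  rw [Ff, rho_wordProd, zero_add]

lemma rho_pair (w x : W) (e : ZMod 2) : rho cs w (x, e) = (w * x * w⁻¹, e + Ff cs w x) := by
  obtain ⟨ω, hω⟩ := cs.wordProd_surjective w
  subst hω
  rw [rho_wordProd, Ff_wordProd]

lemma Ff_mul (a b x : W) : Ff cs (a * b) x = Ff cs b x + Ff cs a (b * x * b⁻¹) := by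
  rw [Ff, map_mul, Equiv.Perm.mul_apply, rho_pair, rho_pair, zero_add]

lemma Ff_one (x : W) : Ff cs 1 x = 0 := by rw [Ff, map_one]; rfl

lemma Ff_inv (a x : W) : Ff cs a⁻¹ x = Ff cs a (a⁻¹ * x * a) := by
  apply zmod2_eq_of_add_eq_zero
  have := Ff_mul cs a a⁻¹ x
  rw [mul_inv_cancel, Ff_one, inv_inv] at this
  exact this.symm

lemma Ff_simple (i : B) : Ff cs (σ i) (σ i) = 1 := by
  rw [Ff, rho_simple, sigmaPerm_apply, zero_add]
  exact ind_eq_one rfl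

lemma Ff_refl_self {t : W} (ht : cs.IsReflection t) : Ff cs t t = 1 := by
  obtain ⟨u, i, rfl⟩ := ht
  have e1 := Ff_mul cs (u * cs.simple i) u⁻¹ (u * cs.simple i * u⁻¹)
  rw [inv_inv] at e1
  have e2 : u⁻¹ * (u * cs.simple i * u⁻¹) * u = cs.simple i := by group
  rw [e2] at e1
  have e3 : Ff cs u⁻¹ (u * cs.simple i * u⁻¹) = Ff cs u (cs.simple i) := by
    rw [Ff_inv, e2]
  have e4 : Ff cs (u * cs.simple i) (cs.simple i) = 1 + Ff cs u (cs.simple i) := by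
    have h := Ff_mul cs u (cs.simple i) (cs.simple i)
    rw [cs.inv_simple, mul_assoc, cs.simple_mul_simple_self, mul_one, Ff_simple] at h
    rw [h, add_comm]
  rw [e1, e3, e4, show Ff cs u (cs.simple i) + (1 + Ff cs u (cs.simple i)) =
    1 + (Ff cs u (cs.simple i) + Ff cs u (cs.simple i)) by ring, zmod2_add_self, add_zero]

lemma Ff_eq_one_of_inversion {w t : W} (ht : cs.IsReflection t) (hlt : ℓ (w * t) < ℓ w) :
    Ff cs w t = 1 := by
  have h0 : Ff cs (w * t) t = 0 := by
    by_contra hc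
    obtain ⟨ω, hred, hω⟩ := cs.exists_reduced_word' (w * t)
    have h1 : cnt t (cs.rightInvSeq ω) ≠ 0 := by rw [← Ff_wordProd, ← hω]; exact hc
    have h2 := cs.isRightInversion_of_mem_rightInvSeq hred (mem_of_cnt_ne_zero h1)
    rw [← hω] at h2
    have h3 : w * t * t = w := by rw [mul_assoc, ht.mul_self, mul_one]
    have h4 := h2.2
    rw [h3] at h4
    omega
  have : Ff cs ((w * t) * t) t = Ff cs t t + Ff cs (w * t) (t * t * t⁻¹) := Ff_mul cs _ t t
  rw [mul_assoc, ht.mul_self, mul_one] at this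
  rw [this, one_mul, ht.inv, Ff_refl_self cs ht, h0, add_zero]

lemma mem_ris_of_inversion {w t : W} {ω : List B} (ht : cs.IsReflection t)
    (hlt : ℓ (w * t) < ℓ w) (hω : π ω = w) : t ∈ cs.rightInvSeq ω := by
  apply mem_of_cnt_ne_zero
  rw [← Ff_wordProd, hω, Ff_eq_one_of_inversion cs ht hlt]
  exact one_ne_zero

/-- strong exchange, right version, arbitrary word -/
lemma exchange_right {w t : W} {ω : List B} (ht : cs.IsReflection t)
    (hlt : ℓ (w * t) < ℓ w) (hω : π ω = w) :
    ∃ ω', ω' <+ ω ∧ ω'.length + 1 = ω.length ∧ π ω' = w * t := by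
  have hmem := mem_ris_of_inversion cs ht hlt hω
  obtain ⟨j, hj, hget⟩ := List.mem_iff_getElem.mp hmem
  rw [cs.length_rightInvSeq] at hj
  refine ⟨ω.eraseIdx j, List.eraseIdx_sublist ω j, List.length_eraseIdx_add_one hj, ?_⟩
  have := cs.wordProd_mul_getD_rightInvSeq ω j
  rw [List.getD_eq_getElem _ 1 (by rw [cs.length_rightInvSeq]; exact hj), hget, hω] at this
  exact this.symm

/-- strong exchange, left version, arbitrary word -/
lemma exchange_left {w t : W} {ω : List B} (ht : cs.IsReflection t)
    (hlt : ℓ (t * w) < ℓ w) (hω : π ω = w) :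
    ∃ ω', ω' <+ ω ∧ ω'.length + 1 = ω.length ∧ π ω' = t * w := by
  have hmem : t ∈ cs.leftInvSeq ω := by
    have h1 : t ∈ cs.rightInvSeq ω.reverse := by
      apply mem_ris_of_inversion cs ht _ (by rw [cs.wordProd_reverse, hω])
      rw [show w⁻¹ * t = (t⁻¹ * w)⁻¹ by group, cs.length_inv, ht.inv, cs.length_inv]
      exact hlt
    rw [cs.rightInvSeq_reverse, List.mem_reverse] at h1
    exact h1
  obtain ⟨j, hj, hget⟩ := List.mem_iff_getElem.mp hmem
  rw [cs.length_leftInvSeq] at hj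
  refine ⟨ω.eraseIdx j, List.eraseIdx_sublist ω j, List.length_eraseIdx_add_one hj, ?_⟩
  have := cs.getD_leftInvSeq_mul_wordProd ω j
  rw [List.getD_eq_getElem _ 1 (by rw [cs.length_leftInvSeq]; exact hj), hget, hω] at this
  exact this.symm

/-- Bruhat covering-ish step -/
def bstep (a b : W) : Prop := ∃ t, cs.IsReflection t ∧ b = a * t ∧ ℓ a < ℓ b

/-- chain form of the Bruhat order -/
def Rle (v w : W) : Prop := Relation.ReflTransGen (bstep cs) v w

lemma rle_refl (v : W) : Rle cs v v := Relation.ReflTransGen.refl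

lemma rle_trans {u v w : W} (h1 : Rle cs u v) (h2 : Rle cs v w) : Rle cs u w :=
  Relation.ReflTransGen.trans h1 h2

lemma rle_length_le {v w : W} (h : Rle cs v w) : ℓ v ≤ ℓ w := by
  induction h with
  | refl => exact le_refl _
  | tail h step ih =>
    obtain ⟨t, ht, rfl, hlt⟩ := step
    omega

lemma rle_step {w t : W} (ht : cs.IsReflection t) (h : ℓ w < ℓ (w * t)) :
    Rle cs w (w * t) := Relation.ReflTransGen.single ⟨t, ht, rfl, h⟩

lemma rle_step' {w t : W} (ht : cs.IsReflection t) (h : ℓ (w * t) < ℓ w) :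
    Rle cs (w * t) w := by
  have hw : w = (w * t) * t := by rw [mul_assoc, ht.mul_self, mul_one]
  nth_rewrite 2 [hw]
  apply rle_step cs ht
  rw [← hw]
  exact h

lemma rle_step_left {w t : W} (ht : cs.IsReflection t) (h : ℓ w < ℓ (t * w)) :
    Rle cs w (t * w) := by
  have h2 : t * w = w * (w⁻¹ * t * w) := by group
  have h3 : cs.IsReflection (w⁻¹ * t * w) := by
    have := ht.conj w⁻¹
    rwa [inv_inv] at this
  rw [h2]
  apply rle_step cs h3
  rw [← h2]
  exact h

lemma rle_step_left' {w t : W} (ht : cs.IsReflection t) (h : ℓ (t * w) < ℓ w) :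
    Rle cs (t * w) w := by
  have hw : w = t * (t * w) := by rw [← mul_assoc, ht.mul_self, one_mul]
  nth_rewrite 2 [hw]
  apply rle_step_left cs ht
  rw [← hw]
  exact h

/-- chain order gives subwords of every word -/
lemma rle_subword {v w : W} (h : Rle cs v w) :
    ∀ ω : List B, π ω = w → ∃ ω', ω' <+ ω ∧ π ω' = v := by
  induction h with
  | refl => exact fun ω hω => ⟨ω, List.Sublist.refl ω, hω⟩
  | @tail b c hvb step ih =>
    intro ω hω
    obtain ⟨t, ht, rfl, hlt⟩ := step
    have hback : ℓ ((b * t) * t) < ℓ (b * t) := by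
      rw [mul_assoc, ht.mul_self, mul_one]
      exact hlt
    obtain ⟨ω₁, hsub, _, hπ⟩ := exchange_right cs ht hback hω
    rw [mul_assoc, ht.mul_self, mul_one] at hπ
    obtain ⟨ω', hsub', hπ'⟩ := ih ω₁ hπ
    exact ⟨ω', hsub'.trans hsub, hπ'⟩

lemma sublist_concat_cases {ω' ρ : List B} {i : B} (h : ω' <+ ρ ++ [i]) :
    ω' <+ ρ ∨ ∃ ρ', ω' = ρ' ++ [i] ∧ ρ' <+ ρ := by
  rcases List.sublist_append_iff.mp h with ⟨x, y, rfl, hx, hy⟩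
  rcases List.sublist_singleton.mp hy with rfl | rfl
  · exact Or.inl (by simpa using hx)
  · exact Or.inr ⟨x, rfl, hx⟩

/-- The master induction: subword property and one-sided lifting properties. -/
lemma big (n : ℕ) :
    (∀ ω : List B, cs.IsReduced ω → ω.length = n →
       ∀ ω', ω' <+ ω → Rle cs (π ω') (π ω)) ∧
    (∀ w : W, ℓ w = n → ∀ (i : B) (v : W), Rle cs v w → ℓ w < ℓ (w * σ i) →
       Rle cs (v * σ i) (w * σ i)) ∧
    (∀ w : W, ℓ w = n → ∀ (i : B) (v : W), Rle cs v w → ℓ (w * σ i) < ℓ w →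
       Rle cs (v * σ i) w) := by
  induction n using Nat.strong_induction_on with
  | _ n IH =>
  refine ⟨?_, ?_, ?_⟩
  · -- subword property at level n
    intro ω hred hlen ω' hsub
    rcases List.eq_nil_or_concat ω with rfl | ⟨ρ, i, rfl⟩
    · rw [List.sublist_nil.mp hsub]
      exact rle_refl cs _
    · rw [List.concat_eq_append] at *
      have hρlen : ρ.length + 1 = n := by simpa using hlen
      have hπ : π (ρ ++ [i]) = π ρ * σ i := by
        rw [cs.wordProd_append, cs.wordProd_singleton]
      have hredeq : ℓ (π (ρ ++ [i])) = (ρ ++ [i]).length := hred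
      rw [hπ] at hredeq
      have hℓω : ℓ (π ρ * σ i) = n := by rw [hredeq]; simpa using hlen
      have hρeq : ℓ (π ρ) = ρ.length := by
        have h1 : ℓ (π ρ) ≤ ρ.length := cs.length_wordProd_le ρ
        have h2 := cs.length_mul_simple (π ρ) i
        simp only [List.length_append, List.length_singleton] at hredeq
        omega
      have hρred : cs.IsReduced ρ := hρeq
      have hup : ℓ (π ρ) < ℓ (π ρ * σ i) := by
        rw [hℓω, hρeq]
        omega
      have hρl : ρ.length = n - 1 := by omega
      have hn1 : n - 1 < n := by omega
      rcases sublist_concat_cases hsub with hsub' | ⟨ρ', rfl, hsub'⟩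
      · have h1 : Rle cs (π ω') (π ρ) := (IH (n-1) hn1).1 ρ hρred hρl ω' hsub'
        refine rle_trans cs h1 ?_
        rw [hπ]
        exact rle_step cs (cs.isReflection_simple i) hup
      · have h1 : Rle cs (π ρ') (π ρ) := (IH (n-1) hn1).1 ρ hρred hρl ρ' hsub'
        have h2 := (IH (n-1) hn1).2.1 (π ρ) (by rw [hρeq]; exact hρl) i (π ρ') h1 hup
        rw [hπ, cs.wordProd_append, cs.wordProd_singleton]
        exact h2
  · -- M at level n
    intro w hw i v hvw hup
    rcases Relation.ReflTransGen.cases_tail hvw with rfl | ⟨x, hvx, hstep⟩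
    · exact rle_refl cs _
    · obtain ⟨t, ht, rfl, hlt⟩ := hstep
      have hx : ℓ x < n := by omega
      rcases lt_or_gt_of_ne (cs.length_mul_simple_ne x i) with hxs | hxs
      · -- ℓ (x σ i) < ℓ x : use M2 at level ℓ x
        have h1 : Rle cs (v * σ i) x := (IH (ℓ x) hx).2.2 x rfl i v hvx hxs
        refine rle_trans cs h1 (rle_trans cs (rle_step cs ht hlt) ?_)
        exact rle_step cs (cs.isReflection_simple i) hup
      · -- ℓ x < ℓ (x σ i) : use M at level ℓ x
        have h1 : Rle cs (v * σ i) (x * σ i) := (IH (ℓ x) hx).2.1 x rfl i v hvx hxs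
        refine rle_trans cs h1 ?_
        have hconj : cs.IsReflection (σ i * t * σ i) := by
          have := ht.conj (σ i)
          rwa [cs.inv_simple] at this
        have heq : (x * σ i) * (σ i * t * σ i) = (x * t) * σ i := by
          rw [show x * σ i * (σ i * t * σ i) = x * (σ i * σ i) * t * σ i by group,
            cs.simple_mul_simple_self, mul_one]
        have hlen : ℓ (x * σ i) < ℓ ((x * t) * σ i) := by
          have e1 : ℓ ((x * t) * σ i) = ℓ (x * t) + 1 := by
            have := cs.length_mul_simple (x * t) i
            rcases this with h | h
            · exact h
            · omega
          have e2 : ℓ (x * σ i) ≤ ℓ x + 1 := by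
            have := cs.length_mul_simple x i
            omega
          omega
        have := rle_step cs hconj (by rw [heq]; exact hlen)
        rw [heq] at this
        exact this
  · -- M2 at level n
    intro w hw i v hvw hdn
    obtain ⟨ρ, hρred, hρ⟩ := cs.exists_reduced_word' (w * σ i)
    have hws : ℓ (w * σ i) = n - 1 := by
      have := cs.length_mul_simple w i
      omega
    have hρlen : ρ.length = n - 1 := by
      have h9 : ℓ (w * σ i) = ρ.length := by rw [hρ]; exact hρred
      omega
    have hn0 : 0 < n := by omega
    have hπω : π (ρ ++ [i]) = w := by
      rw [cs.wordProd_append, cs.wordProd_singleton, ← hρ, mul_assoc,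
        cs.simple_mul_simple_self, mul_one]
    obtain ⟨ω', hsub, hπ'⟩ := rle_subword cs hvw (ρ ++ [i]) hπω
    have hn1 : n - 1 < n := by omega
    rcases sublist_concat_cases hsub with hsub' | ⟨ρ', rfl, hsub'⟩
    · -- v is a subword of ρ : Rle v (w σ i)
      have h1 : Rle cs v (w * σ i) := by
        rw [← hπ'] ; rw [hρ]
        exact (IH (n-1) hn1).1 ρ hρred hρlen ω' hsub'
      rcases lt_or_gt_of_ne (cs.length_mul_simple_ne v i) with hvs | hvs
      · exact rle_trans cs (rle_step' cs (cs.isReflection_simple i) hvs)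
          (rle_trans cs h1 (rle_step' cs (cs.isReflection_simple i) hdn))
      · have h2 := (IH (n-1) hn1).2.1 (w * σ i) hws i v h1 (by
          rw [mul_assoc, cs.simple_mul_simple_self, mul_one]; omega)
        rw [mul_assoc, cs.simple_mul_simple_self, mul_one] at h2
        exact h2
    · -- v = (π ρ') * σ i
      have hπρ' : π ρ' = v * σ i := by
        rw [cs.wordProd_append, cs.wordProd_singleton] at hπ'
        rw [← hπ', mul_assoc, cs.simple_mul_simple_self, mul_one]
      have h1 : Rle cs (v * σ i) (w * σ i) := by
        rw [← hπρ', hρ]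
        exact (IH (n-1) hn1).1 ρ hρred hρlen ρ' hsub'
      exact rle_trans cs h1 (rle_step' cs (cs.isReflection_simple i) hdn)

lemma rle_of_subword {ω ω' : List B} (hred : cs.IsReduced ω) (hsub : ω' <+ ω) :
    Rle cs (π ω') (π ω) :=
  (big cs ω.length).1 ω hred rfl ω' hsub

lemma rle_mul_simple_up {v w : W} {i : B} (h : Rle cs v w) (hup : ℓ w < ℓ (w * σ i)) :
    Rle cs (v * σ i) (w * σ i) :=
  (big cs (ℓ w)).2.1 w rfl i v h hup

lemma rle_mul_simple_down {v w : W} {i : B} (h : Rle cs v w) (hdn : ℓ (w * σ i) < ℓ w) :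
    Rle cs (v * σ i) w :=
  (big cs (ℓ w)).2.2 w rfl i v h hdn

/-- M3 : if `v ≤ w`, `s` is a right descent of `w` but not of `v`, then `v ≤ ws`. -/
lemma rle_of_descent {v w : W} {i : B} (h : Rle cs v w) (hdn : ℓ (w * σ i) < ℓ w)
    (hvup : ℓ v < ℓ (v * σ i)) : Rle cs v (w * σ i) := by
  obtain ⟨ρ, hρred, hρ⟩ := cs.exists_reduced_word' (w * σ i)
  have hπω : π (ρ ++ [i]) = w := by
    rw [cs.wordProd_append, cs.wordProd_singleton, ← hρ, mul_assoc,
      cs.simple_mul_simple_self, mul_one]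
  obtain ⟨ω', hsub, hπ'⟩ := rle_subword cs h (ρ ++ [i]) hπω
  rcases sublist_concat_cases hsub with hsub' | ⟨ρ', rfl, hsub'⟩
  · rw [hρ, ← hπ']
    exact rle_of_subword cs hρred hsub'
  · have hπρ' : π ρ' = v * σ i := by
      rw [cs.wordProd_append, cs.wordProd_singleton] at hπ'
      rw [← hπ', mul_assoc, cs.simple_mul_simple_self, mul_one]
    have hback : ℓ ((v * σ i) * σ i) < ℓ (v * σ i) := by
      rw [mul_assoc, cs.simple_mul_simple_self, mul_one]
      exact hvup
    obtain ⟨ρ'', hsub'', _, hπ''⟩ :=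
      exchange_right cs (cs.isReflection_simple i) hback hπρ'
    rw [mul_assoc, cs.simple_mul_simple_self, mul_one] at hπ''
    rw [hρ, ← hπ'']
    exact rle_of_subword cs hρred (hsub''.trans hsub')

lemma rle_inv {v w : W} (h : Rle cs v w) : Rle cs v⁻¹ w⁻¹ := by
  induction h with
  | refl => exact rle_refl cs _
  | @tail b c hvb step ih =>
    obtain ⟨t, ht, rfl, hlt⟩ := step
    refine Relation.ReflTransGen.tail ih ⟨b * t * b⁻¹, ht.conj b, ?_, ?_⟩
    · rw [mul_inv_rev, ht.inv]; group
    · rw [cs.length_inv, cs.length_inv]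
      exact hlt

lemma rle_simple_mul_up {v w : W} {i : B} (h : Rle cs v w) (hup : ℓ w < ℓ (σ i * w)) :
    Rle cs (σ i * v) (σ i * w) := by
  have h2 : ℓ w⁻¹ < ℓ (w⁻¹ * σ i) := by
    rw [show w⁻¹ * σ i = (σ i * w)⁻¹ by rw [mul_inv_rev, cs.inv_simple], cs.length_inv,
      cs.length_inv]
    exact hup
  have := rle_inv cs (rle_mul_simple_up cs (rle_inv cs h) h2)
  rwa [mul_inv_rev, mul_inv_rev, cs.inv_simple, inv_inv, inv_inv] at this

lemma rle_simple_mul_down {v w : W} {i : B} (h : Rle cs v w) (hdn : ℓ (σ i * w) < ℓ w) :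
    Rle cs (σ i * v) w := by
  have h2 : ℓ (w⁻¹ * σ i) < ℓ w⁻¹ := by
    rw [show w⁻¹ * σ i = (σ i * w)⁻¹ by rw [mul_inv_rev, cs.inv_simple], cs.length_inv,
      cs.length_inv]
    exact hdn
  have := rle_inv cs (rle_mul_simple_down cs (rle_inv cs h) h2)
  rwa [mul_inv_rev, cs.inv_simple, inv_inv, inv_inv] at this

lemma rle_of_descent_left {v w : W} {i : B} (h : Rle cs v w) (hdn : ℓ (σ i * w) < ℓ w)
    (hvup : ℓ v < ℓ (σ i * v)) : Rle cs v (σ i * w) := by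
  have h2 : ℓ (w⁻¹ * σ i) < ℓ w⁻¹ := by
    rw [show w⁻¹ * σ i = (σ i * w)⁻¹ by rw [mul_inv_rev, cs.inv_simple], cs.length_inv,
      cs.length_inv]
    exact hdn
  have h3 : ℓ v⁻¹ < ℓ (v⁻¹ * σ i) := by
    rw [show v⁻¹ * σ i = (σ i * v)⁻¹ by rw [mul_inv_rev, cs.inv_simple], cs.length_inv,
      cs.length_inv]
    exact hvup
  have := rle_inv cs (rle_of_descent cs (rle_inv cs h) h2 h3)
  rwa [mul_inv_rev, cs.inv_simple, inv_inv, inv_inv] at this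

lemma bruhatLE_iff_rle {v w : W} : BruhatLE cs v w ↔ Rle cs v w := by
  constructor
  · rintro ⟨l, hred, rfl, l', hsub, rfl⟩
    exact rle_of_subword cs hred hsub
  · intro h
    obtain ⟨ω, hred, hω⟩ := cs.exists_reduced_word' w
    obtain ⟨ω', hsub, hπ'⟩ := rle_subword cs h ω hω.symm
    exact ⟨ω, hred, hω.symm, ω', hsub, hπ'⟩

lemma rle_one (z : W) : Rle cs 1 z := by
  suffices H : ∀ (n : ℕ) (z : W), ℓ z = n → Rle cs 1 z from H (ℓ z) z rfl
  intro n
  induction n using Nat.strong_induction_on with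
  | _ n IH =>
  intro z hn
  rcases eq_or_ne z 1 with rfl | hz
  · exact rle_refl cs 1
  · obtain ⟨i, hi⟩ := cs.exists_rightDescent_of_ne_one hz
    have hi' : ℓ (z * σ i) < ℓ z := hi
    have h1 : Rle cs 1 (z * σ i) := IH (ℓ (z * σ i)) (by omega) _ rfl
    exact rle_trans cs h1 (rle_step' cs (cs.isReflection_simple i) hi)

lemma rle_antisymm {v w : W} (h1 : Rle cs v w) (h2 : Rle cs w v) : v = w := by
  have hl1 := rle_length_le cs h1
  have hl2 := rle_length_le cs h2
  obtain ⟨ω, hred, hω⟩ := cs.exists_reduced_word' w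
  obtain ⟨ω', hsub, hπ'⟩ := rle_subword cs h1 ω hω.symm
  have e1 : ℓ (π ω') ≤ ω'.length := cs.length_wordProd_le ω'
  have e2 : ℓ (π ω) = ω.length := hred
  have : ω' = ω := hsub.eq_of_length_le (by rw [hπ'] at e1; rw [← hω] at e2; omega)
  rw [← hπ', this, ← hω]

lemma all_descents_max {z : W} (hz : ∀ i : B, ℓ (z * σ i) < ℓ z) (v : W) : Rle cs v z := by
  suffices H : ∀ (n : ℕ) (v : W), ℓ v = n → Rle cs v z from H (ℓ v) v rfl
  intro n
  induction n using Nat.strong_induction_on with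
  | _ n IH =>
  intro v hn
  rcases eq_or_ne v 1 with rfl | hv
  · exact rle_one cs z
  · obtain ⟨i, hi⟩ := cs.exists_rightDescent_of_ne_one hv
    have hi' : ℓ (v * σ i) < ℓ v := hi
    have h1 : Rle cs (v * σ i) z := IH (ℓ (v * σ i)) (by omega) _ rfl
    have h2 := rle_mul_simple_down cs h1 (hz i)
    rwa [mul_assoc, cs.simple_mul_simple_self, mul_one] at h2

section LongestElement

variable {wo : W} (hwo : ∀ v : W, cs.length v ≤ cs.length wo)
include hwo

lemma wo_right_descent (i : B) : ℓ (wo * σ i) < ℓ wo := by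
  have h1 := cs.length_mul_simple wo i
  have h2 := hwo (wo * σ i)
  omega

lemma rle_wo (v : W) : Rle cs v wo := all_descents_max cs (wo_right_descent cs hwo) v

lemma eq_wo_of_length_eq {v : W} (h : ℓ v = ℓ wo) : v = wo := by
  have h1 := rle_wo cs hwo v
  obtain ⟨ω, hred, hω⟩ := cs.exists_reduced_word' wo
  obtain ⟨ω', hsub, hπ'⟩ := rle_subword cs h1 ω hω.symm
  have e1 : ℓ (π ω') ≤ ω'.length := cs.length_wordProd_le ω'
  have e2 : ℓ (π ω) = ω.length := hred
  have : ω' = ω := hsub.eq_of_length_le (by rw [hπ'] at e1; rw [← hω] at e2; omega)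
  rw [← hπ', this, ← hω]

lemma wo_inv : wo⁻¹ = wo := eq_wo_of_length_eq cs hwo (cs.length_inv wo)

lemma wo_sq : wo * wo = 1 := by
  nth_rewrite 1 [← wo_inv cs hwo]
  exact inv_mul_cancel wo

lemma exists_extension (v : W) : ∃ z : W, v * z = wo ∧ ℓ v + ℓ z = ℓ wo := by
  suffices H : ∀ (n : ℕ) (v : W), ℓ wo - ℓ v = n → ∃ z : W, v * z = wo ∧ ℓ v + ℓ z = ℓ wo from
    H (ℓ wo - ℓ v) v rfl
  intro n
  induction n using Nat.strong_induction_on with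
  | _ n IH =>
  intro v hn
  rcases eq_or_ne (ℓ v) (ℓ wo) with hv | hv
  · exact ⟨1, by rw [mul_one, eq_wo_of_length_eq cs hwo hv], by simp [hv]⟩
  · have hlt : ℓ v < ℓ wo := lt_of_le_of_ne (hwo v) hv
    have hex : ∃ i : B, ℓ v < ℓ (v * σ i) := by
      by_contra hc
      push_neg at hc
      have hall : ∀ i : B, ℓ (v * σ i) < ℓ v := by
        intro i
        exact lt_of_le_of_ne (hc i) (cs.length_mul_simple_ne v i)
      have := rle_length_le cs (all_descents_max cs hall wo)
      omega
    obtain ⟨i, hi⟩ := hex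
    have hup : ℓ (v * σ i) = ℓ v + 1 := by
      have := cs.length_mul_simple v i
      omega
    obtain ⟨z', hz', hlz'⟩ := IH (ℓ wo - ℓ (v * σ i)) (by omega) (v * σ i) rfl
    refine ⟨σ i * z', by rw [← mul_assoc]; exact hz', ?_⟩
    have h1 : ℓ (σ i * z') ≤ 1 + ℓ z' := by
      have := cs.length_mul_le (σ i) z'
      rw [cs.length_simple] at this
      exact this
    have h2 : ℓ wo ≤ ℓ v + ℓ (σ i * z') := by
      have := cs.length_mul_le v (σ i * z')
      rw [← mul_assoc, hz'] at this
      exact this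
    omega

lemma length_mul_wo (v : W) : ℓ v + ℓ (v * wo) = ℓ wo := by
  obtain ⟨z, hz, hl⟩ := exists_extension cs hwo v⁻¹
  have : z = v * wo := by rw [← hz]; group
  rw [this] at hl
  rw [cs.length_inv] at hl
  exact hl

lemma rle_wo_reverse {v w : W} (h : Rle cs v w) : Rle cs (w * wo) (v * wo) := by
  induction h with
  | refl => exact rle_refl cs _
  | @tail b c hvb step ih =>
    obtain ⟨t, ht, rfl, hlt⟩ := step
    refine rle_trans cs ?_ ih
    have hb : b * wo = ((b * t) * wo) * (wo * t * wo) := by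
      rw [show ((b * t) * wo) * (wo * t * wo) = b * (t * (wo * wo) * t) * wo by group,
        wo_sq cs hwo, mul_one, ht.mul_self, mul_one]
    have hrefl : cs.IsReflection (wo * t * wo) := by
      have := ht.conj wo
      rwa [wo_inv cs hwo] at this
    have hlen : ℓ ((b * t) * wo) < ℓ (b * wo) := by
      have e1 := length_mul_wo cs hwo b
      have e2 := length_mul_wo cs hwo (b * t)
      omega
    rw [hb]
    apply rle_step cs hrefl
    rw [← hb]
    exact hlen

end LongestElement

section Parabolic

lemma mem_wpar_iff {S : Set B} {x : W} :
    x ∈ WPar cs S ↔ ∃ ω : List B, (∀ i ∈ ω, i ∈ S) ∧ π ω = x := by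
  constructor
  · intro h
    induction h using Subgroup.closure_induction with
    | mem z hz =>
      obtain ⟨i, hi, rfl⟩ := hz
      exact ⟨[i], by simpa using hi, cs.wordProd_singleton i⟩
    | one => exact ⟨[], by simp, cs.wordProd_nil⟩
    | mul a b _ _ iha ihb =>
      obtain ⟨ω₁, h₁, rfl⟩ := iha
      obtain ⟨ω₂, h₂, rfl⟩ := ihb
      refine ⟨ω₁ ++ ω₂, ?_, cs.wordProd_append ω₁ ω₂⟩
      intro i hi
      rcases List.mem_append.mp hi with h | h
      · exact h₁ i h
      · exact h₂ i h
    | inv a _ iha =>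
      obtain ⟨ω, h₁, rfl⟩ := iha
      exact ⟨ω.reverse, fun i hi => h₁ i (List.mem_reverse.mp hi), cs.wordProd_reverse ω⟩
  · rintro ⟨ω, hS, rfl⟩
    induction ω with
    | nil => simpa using Subgroup.one_mem _
    | cons i ω ih =>
      rw [cs.wordProd_cons]
      exact Subgroup.mul_mem _
        (Subgroup.subset_closure ⟨i, hS i (List.mem_cons_self (a := i) (l := ω)), rfl⟩)
        (ih (fun j hj => hS j (List.mem_cons_of_mem i hj)))

lemma simple_mem_wpar {S : Set B} {i : B} (hi : i ∈ S) : σ i ∈ WPar cs S :=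
  Subgroup.subset_closure ⟨i, hi, rfl⟩

/-- deletion property: every word has a reduced sublist with the same product -/
lemma deletion (ω : List B) : ∃ ω', ω' <+ ω ∧ cs.IsReduced ω' ∧ π ω' = π ω := by
  suffices H : ∀ (n : ℕ) (ω : List B), ω.length = n →
      ∃ ω', ω' <+ ω ∧ cs.IsReduced ω' ∧ π ω' = π ω from H ω.length ω rfl
  intro n
  induction n using Nat.strong_induction_on with
  | _ n IH =>
  intro ω hn
  by_cases hred : cs.IsReduced ω
  · exact ⟨ω, List.Sublist.refl ω, hred, rfl⟩
  · classical
    have hex : ∃ m, ¬ cs.IsReduced (ω.take m) := ⟨ω.length, by rwa [List.take_length]⟩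
    set m₀ := Nat.find hex with hm₀
    have hbad : ¬ cs.IsReduced (ω.take m₀) := Nat.find_spec hex
    have hm₀le : m₀ ≤ ω.length := Nat.find_le (by rwa [List.take_length])
    have hm₀pos : 0 < m₀ := by
      rcases Nat.eq_zero_or_pos m₀ with h | h
      · exfalso
        apply hbad
        rw [h, List.take_zero]
        show ℓ (π []) = _
        simp
      · exact h
    have hprev : cs.IsReduced (ω.take (m₀ - 1)) := by
      have := Nat.find_min hex (show m₀ - 1 < m₀ by omega)
      exact not_not.mp this
    have hm1lt : m₀ - 1 < ω.length := by omega
    have htake : ω.take m₀ = ω.take (m₀ - 1) ++ [ω[m₀ - 1]] := by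
      have h' : ω.take ((m₀ - 1) + 1) = ω.take (m₀ - 1) ++ [ω[m₀ - 1]] := by
        rw [List.take_succ, List.getElem?_eq_getElem hm1lt]
        rfl
      rw [← h']
      congr 1
      omega
    set p := π (ω.take (m₀ - 1)) with hp
    set b := ω[m₀ - 1] with hb
    have hπtake : π (ω.take m₀) = p * σ b := by
      rw [htake, cs.wordProd_append, cs.wordProd_singleton]
    have hplen : ℓ p = m₀ - 1 := by
      have := hprev
      unfold CoxeterSystem.IsReduced at this
      rw [← hp] at this
      rw [this, List.length_take]
      omega
    have hdesc : ℓ (p * σ b) < ℓ p := by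
      have h1 := cs.length_mul_simple p b
      rcases h1 with h | h
      · exfalso
        apply hbad
        show ℓ (π (ω.take m₀)) = (ω.take m₀).length
        rw [hπtake, h, hplen, List.length_take]
        omega
      · omega
    obtain ⟨τ, hτsub, _, hτπ⟩ :=
      exchange_right cs (cs.isReflection_simple b) hdesc hp.symm
    have hτπ' : π τ = p * σ b := hτπ
    have hπω : π (τ ++ ω.drop m₀) = π ω := by
      rw [cs.wordProd_append, hτπ', ← hπtake, ← cs.wordProd_append, List.take_append_drop]
    have hsubω : τ ++ ω.drop m₀ <+ ω := by
      have h1 : τ <+ ω.take m₀ := by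
        refine hτsub.trans ?_
        rw [show ω.take (m₀ - 1) = (ω.take m₀).take (m₀ - 1) by
          rw [List.take_take]; congr 1; omega]
        exact List.take_sublist _ _
      have := h1.append (List.Sublist.refl (ω.drop m₀))
      rwa [List.take_append_drop] at this
    have hlen : (τ ++ ω.drop m₀).length < n := by
      have h1 := hτsub.length_le
      rw [List.length_append, List.length_drop]
      rw [List.length_take] at h1
      omega
    obtain ⟨ω'', hsub'', hred'', hπ''⟩ := IH _ hlen _ rfl
    exact ⟨ω'', hsub''.trans hsubω, hred'', by rw [hπ'', hπω]⟩

lemma wpar_reduced_word {S : Set B} {x : W} (h : x ∈ WPar cs S) :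
    ∃ ω : List B, (∀ i ∈ ω, i ∈ S) ∧ cs.IsReduced ω ∧ π ω = x := by
  obtain ⟨ω, hS, rfl⟩ := (mem_wpar_iff cs).mp h
  obtain ⟨ω', hsub, hred, hπ⟩ := deletion cs ω
  exact ⟨ω', fun i hi => hS i (hsub.mem hi), hred, hπ⟩

lemma wpar_left_decomp {S : Set B} {x : W} (h : x ∈ WPar cs S) (hx : x ≠ 1) :
    ∃ i ∈ S, ∃ x' ∈ WPar cs S, x = σ i * x' ∧ ℓ x' + 1 = ℓ x := by
  obtain ⟨ω, hS, hred, rfl⟩ := wpar_reduced_word cs h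
  rcases ω with _ | ⟨i, ρ⟩
  · exact absurd (cs.wordProd_nil) hx
  · refine ⟨i, hS i (List.mem_cons_self (a := i) (l := ρ)), π ρ,
      (mem_wpar_iff cs).mpr ⟨ρ, fun j hj => hS j (List.mem_cons_of_mem i hj), rfl⟩,
      cs.wordProd_cons i ρ, ?_⟩
    have h1 : cs.IsReduced ρ := by
      have := CoxeterSystem.IsReduced.drop hred (j := 1)
      simpa using this
    have e1 : ℓ (π ρ) = ρ.length := h1
    have e2 : ℓ (π (i :: ρ)) = ρ.length + 1 := by
      have : ℓ (π (i :: ρ)) = (i :: ρ).length := hred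
      simpa using this
    omega

lemma wpar_right_decomp {S : Set B} {x : W} (h : x ∈ WPar cs S) (hx : x ≠ 1) :
    ∃ i ∈ S, ∃ x' ∈ WPar cs S, x = x' * σ i ∧ ℓ x' + 1 = ℓ x := by
  obtain ⟨ω, hS, hred, rfl⟩ := wpar_reduced_word cs h
  rcases List.eq_nil_or_concat ω with rfl | ⟨ρ, i, rfl⟩
  · exact absurd (cs.wordProd_nil) hx
  · rw [List.concat_eq_append] at *
    refine ⟨i, hS i (by simp), π ρ,
      (mem_wpar_iff cs).mpr ⟨ρ, fun j hj => hS j (by simp [hj]), rfl⟩,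
      by rw [cs.wordProd_append, cs.wordProd_singleton], ?_⟩
    have h1 : cs.IsReduced ρ := by
      have := CoxeterSystem.IsReduced.take hred (j := ρ.length)
      simpa using this
    have e1 : ℓ (π ρ) = ρ.length := h1
    have e2 : ℓ (π (ρ ++ [i])) = ρ.length + 1 := by
      have : ℓ (π (ρ ++ [i])) = (ρ ++ [i]).length := hred
      simpa using this
    omega

end Parabolic

section Cosets

variable (S T : Set B)

/-- the double coset `W(S) w W(T)` -/
def DC (w : W) : Set W := {v | ∃ x ∈ WPar cs S, ∃ y ∈ WPar cs T, v = x * w * y}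

lemma self_mem_dc (w : W) : w ∈ DC cs S T w :=
  ⟨1, Subgroup.one_mem _, 1, Subgroup.one_mem _, by group⟩

lemma dc_eq {u w : W} (h : u ∈ DC cs S T w) : DC cs S T u = DC cs S T w := by
  obtain ⟨x, hx, y, hy, rfl⟩ := h
  ext v
  constructor
  · rintro ⟨x', hx', y', hy', rfl⟩
    exact ⟨x' * x, Subgroup.mul_mem _ hx' hx, y * y', Subgroup.mul_mem _ hy hy', by group⟩
  · rintro ⟨x', hx', y', hy', rfl⟩
    exact ⟨x' * x⁻¹, Subgroup.mul_mem _ hx' (Subgroup.inv_mem _ hx),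
      y⁻¹ * y', Subgroup.mul_mem _ (Subgroup.inv_mem _ hy) hy', by group⟩

lemma exists_min_dc (w : W) : ∃ u ∈ DC cs S T w, ∀ v ∈ DC cs S T w, ℓ u ≤ ℓ v := by
  classical
  have hne : {n : ℕ | ∃ v ∈ DC cs S T w, ℓ v = n}.Nonempty :=
    ⟨ℓ w, w, self_mem_dc cs S T w, rfl⟩
  obtain ⟨v, hv, hvl⟩ := Nat.sInf_mem hne
  refine ⟨v, hv, fun c hc => ?_⟩
  rw [hvl]
  exact Nat.sInf_le ⟨c, hc, rfl⟩

/-- a double coset element with no `S`-left descents and no `T`-right descents is Bruhat-below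
every element of its double coset -/
lemma rle_min {u : W} (hS : ∀ i ∈ S, ℓ u < ℓ (σ i * u)) (hT : ∀ i ∈ T, ℓ u < ℓ (u * σ i)) :
    ∀ x ∈ WPar cs S, ∀ y ∈ WPar cs T, Rle cs u (x * u * y) := by
  suffices H : ∀ n : ℕ, ∀ x ∈ WPar cs S, ∀ y ∈ WPar cs T, ℓ x + ℓ y = n →
      Rle cs u (x * u * y) from fun x hx y hy => H _ x hx y hy rfl
  intro n
  induction n using Nat.strong_induction_on with
  | _ n IH =>
  intro x hx y hy hn
  rcases eq_or_ne x 1 with rfl | hx1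
  · rcases eq_or_ne y 1 with rfl | hy1
    · have : (1 : W) * u * 1 = u := by group
      rw [this]
      exact rle_refl cs u
    · obtain ⟨i, hiT, y', hy', rfl, hly⟩ := wpar_right_decomp cs hy hy1
      have hd : (1:W) * u * (y' * σ i) = ((1:W) * u * y') * σ i := by group
      have hm : ℓ (1:W) + ℓ y' < n := by
        rw [cs.length_one] at hn ⊢
        omega
      have IH' : Rle cs u (1 * u * y') := IH _ hm 1 (Subgroup.one_mem _) y' hy' rfl
      rw [hd]
      rcases lt_or_gt_of_ne (cs.length_mul_simple_ne (1 * u * y') i) with hc | hc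
      · exact rle_of_descent cs IH' hc (hT i hiT)
      · exact rle_trans cs IH' (rle_step cs (cs.isReflection_simple i) hc)
  · obtain ⟨i, hiS, x', hx', rfl, hlx⟩ := wpar_left_decomp cs hx hx1
    have hd : (σ i * x') * u * y = σ i * (x' * u * y) := by group
    have hm : ℓ x' + ℓ y < n := by omega
    have IH' : Rle cs u (x' * u * y) := IH _ hm x' hx' y hy rfl
    rw [hd]
    rcases lt_or_gt_of_ne (cs.length_simple_mul_ne (x' * u * y) i) with hc | hc
    · exact rle_of_descent_left cs IH' hc (hS i hiS)
    · exact rle_trans cs IH' (rle_step_left cs (cs.isReflection_simple i) hc)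

/-- a double coset element with all `S`-left descents and all `T`-right descents is Bruhat-above
everything below it, stably under the coset action -/
lemma rle_max {m : W} (hS : ∀ i ∈ S, ℓ (σ i * m) < ℓ m) (hT : ∀ i ∈ T, ℓ (m * σ i) < ℓ m)
    {c : W} (hc : Rle cs c m) :
    ∀ x ∈ WPar cs S, ∀ y ∈ WPar cs T, Rle cs (x * c * y) m := by
  suffices H : ∀ n : ℕ, ∀ x ∈ WPar cs S, ∀ y ∈ WPar cs T, ℓ x + ℓ y = n →
      Rle cs (x * c * y) m from fun x hx y hy => H _ x hx y hy rfl
  intro n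
  induction n using Nat.strong_induction_on with
  | _ n IH =>
  intro x hx y hy hn
  rcases eq_or_ne x 1 with rfl | hx1
  · rcases eq_or_ne y 1 with rfl | hy1
    · have : (1 : W) * c * 1 = c := by group
      rw [this]
      exact hc
    · obtain ⟨i, hiT, y', hy', rfl, hly⟩ := wpar_right_decomp cs hy hy1
      have hd : (1:W) * c * (y' * σ i) = ((1:W) * c * y') * σ i := by group
      have hm : ℓ (1:W) + ℓ y' < n := by
        rw [cs.length_one] at hn ⊢
        omega
      have IH' : Rle cs (1 * c * y') m := IH _ hm 1 (Subgroup.one_mem _) y' hy' rfl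
      rw [hd]
      exact rle_mul_simple_down cs IH' (hT i hiT)
  · obtain ⟨i, hiS, x', hx', rfl, hlx⟩ := wpar_left_decomp cs hx hx1
    have hd : (σ i * x') * c * y = σ i * (x' * c * y) := by group
    have hm : ℓ x' + ℓ y < n := by omega
    have IH' : Rle cs (x' * c * y) m := IH _ hm x' hx' y hy rfl
    rw [hd]
    exact rle_simple_mul_down cs IH' (hS i hiS)

lemma wst_no_left_descent {u : W} (hu : u ∈ WST cs S T) {i : B} (hi : i ∈ S) :
    ℓ u < ℓ (σ i * u) := by
  have h1 : ℓ u ≤ ℓ (σ i * u) :=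
    hu.2 (σ i * u) ⟨σ i, simple_mem_wpar cs hi, 1, Subgroup.one_mem _, by group⟩
  exact lt_of_le_of_ne h1 (Ne.symm (cs.length_simple_mul_ne u i))

lemma wst_no_right_descent {u : W} (hu : u ∈ WST cs S T) {i : B} (hi : i ∈ T) :
    ℓ u < ℓ (u * σ i) := by
  have h1 : ℓ u ≤ ℓ (u * σ i) :=
    hu.2 (u * σ i) ⟨1, Subgroup.one_mem _, σ i, simple_mem_wpar cs hi, by group⟩
  exact lt_of_le_of_ne h1 (Ne.symm (cs.length_mul_simple_ne u i))

lemma rle_wst_le_dc {u : W} (hu : u ∈ WST cs S T) {c : W} (hc : c ∈ DC cs S T u) :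
    Rle cs u c := by
  obtain ⟨x, hx, y, hy, rfl⟩ := hc
  exact rle_min cs S T (fun i hi => wst_no_left_descent cs S T hu hi)
    (fun i hi => wst_no_right_descent cs S T hu hi) x hx y hy

lemma min_unique {a b : W} (ha : a ∈ WST cs S T) (hb : b ∈ WST cs S T)
    (hab : b ∈ DC cs S T a) : a = b := by
  have h1 : Rle cs a b := rle_wst_le_dc cs S T ha hab
  have h2 : a ∈ DC cs S T b := by
    obtain ⟨x, hx, y, hy, rfl⟩ := hab
    exact ⟨x⁻¹, Subgroup.inv_mem _ hx, y⁻¹, Subgroup.inv_mem _ hy, by group⟩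
  exact rle_antisymm cs h1 (rle_wst_le_dc cs S T hb h2)

end Cosets

end CoxBruhat

open CoxBruhat

/-- The map `Ω : W_{S,T} → W_{S,θ(T)}`, sending `u` to the minimal length representative of
`W(S)·u·w_{o,T}·W(θ(T))`, is a bijection reversing the Bruhat order. -/
theorem omega_order_reversing_bijection {B W : Type*} [Group W] {M : CoxeterMatrix B}
    (cs : CoxeterSystem M W) (S T : Set B) (wo woT : W) (θ : B → B) (Ω : W → W)
    (hwo : ∀ v : W, cs.length v ≤ cs.length wo)
    (hθ : ∀ b : B, cs.simple (θ b) = wo⁻¹ * cs.simple b * wo)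
    (hwoT : (∃ y ∈ WPar cs T, woT = y * wo) ∧
      ∀ v : W, (∃ y ∈ WPar cs T, v = y * wo) → cs.length woT ≤ cs.length v)
    (hΩ : ∀ u ∈ WST cs S T, IsMinDoubleCosetRep cs S (θ '' T) (u * woT) (Ω u)) :
    Set.BijOn Ω (WST cs S T) (WST cs S (θ '' T)) ∧
      ∀ u ∈ WST cs S T, ∀ u' ∈ WST cs S T,
        BruhatLE cs u u' → BruhatLE cs (Ω u') (Ω u) := by
  classical
  obtain ⟨⟨y₀, hy₀, hwoTeq⟩, _⟩ := hwoT
  have hwo2 : wo * wo = 1 := wo_sq cs hwo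
  have hwoinv : wo⁻¹ = wo := wo_inv cs hwo
  set Θ : Set B := θ '' T with hΘ
  -- conjugation of parabolic subgroups
  have hθword : ∀ ω : List B, cs.wordProd (ω.map θ) = wo * cs.wordProd ω * wo := by
    intro ω
    induction ω with
    | nil => simp [hwo2]
    | cons i ω ih =>
      rw [List.map_cons, cs.wordProd_cons, cs.wordProd_cons, ih, hθ i, hwoinv,
        show (wo * cs.simple i * wo) * (wo * cs.wordProd ω * wo)
          = wo * cs.simple i * (wo * wo) * cs.wordProd ω * wo by group, hwo2]
      group
  have hθmem : ∀ x ∈ WPar cs T, wo * x * wo ∈ WPar cs Θ := by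
    intro x hx
    obtain ⟨ω, hST, rfl⟩ := (mem_wpar_iff cs).mp hx
    refine (mem_wpar_iff cs).mpr ⟨ω.map θ, ?_, by rw [hθword]⟩
    intro j hj
    obtain ⟨b, hb, rfl⟩ := List.mem_map.mp hj
    exact ⟨b, hST b hb, rfl⟩
  have hθconv : ∀ z ∈ WPar cs Θ, ∃ x ∈ WPar cs T, z = wo * x * wo := by
    intro z hz
    obtain ⟨ω, hSΘ, rfl⟩ := (mem_wpar_iff cs).mp hz
    have : ∃ tw : List B, (∀ b ∈ tw, b ∈ T) ∧ ω = tw.map θ := by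
      clear hz
      induction ω with
      | nil => exact ⟨[], by simp, rfl⟩
      | cons j ω ih =>
        obtain ⟨b, hbT, rfl⟩ := hSΘ j (List.mem_cons_self (a := j) (l := ω))
        obtain ⟨tw, htT, rfl⟩ := ih (fun k hk => hSΘ k (List.mem_cons_of_mem _ hk))
        exact ⟨b :: tw, by
          intro c hc
          rcases List.mem_cons.mp hc with rfl | hc
          · exact hbT
          · exact htT c hc, rfl⟩
    obtain ⟨tw, htT, rfl⟩ := this
    exact ⟨cs.wordProd tw, (mem_wpar_iff cs).mpr ⟨tw, htT, rfl⟩, hθword tw⟩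
  -- the coset identity
  have hA1 : ∀ u v : W,
      (∃ x ∈ WPar cs S, ∃ y ∈ WPar cs Θ, v = x * (u * woT) * y) ↔
        (v * wo ∈ DC cs S T u) := by
    intro u v
    constructor
    · rintro ⟨x, hx, y, hy, rfl⟩
      obtain ⟨ty, hty, rfl⟩ := hθconv y hy
      refine ⟨x, hx, y₀ * ty, Subgroup.mul_mem _ hy₀ hty, ?_⟩
      rw [hwoTeq, show x * (u * (y₀ * wo)) * (wo * ty * wo) * wo
        = x * u * y₀ * (wo * wo) * ty * (wo * wo) by group, hwo2]
      group
    · rintro ⟨x, hx, y, hy, hvwo⟩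
      have hv : v = x * u * y * wo := by
        have h := congrArg (fun z => z * wo) hvwo
        rw [mul_assoc, hwo2, mul_one] at h
        exact h
      refine ⟨x, hx, wo * (y₀⁻¹ * y) * wo, hθmem _ (Subgroup.mul_mem _
        (Subgroup.inv_mem _ hy₀) hy), ?_⟩
      rw [hv, hwoTeq, show x * (u * (y₀ * wo)) * (wo * (y₀⁻¹ * y) * wo)
        = x * u * (y₀ * ((wo * wo) * (y₀⁻¹ * y))) * wo by group, hwo2]
      group
  -- Ω u * wo lies in the double coset of u
  have hMuDC : ∀ u ∈ WST cs S T, Ω u * wo ∈ DC cs S T u := by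
    intro u hu
    exact (hA1 u (Ω u)).mp (hΩ u hu).1
  -- Ω maps into WST S Θ
  have hmaps : ∀ u ∈ WST cs S T, Ω u ∈ WST cs S Θ := by
    intro u hu
    constructor
    · exact ⟨1, Subgroup.one_mem _, 1, Subgroup.one_mem _, by group⟩
    · rintro v ⟨x, hx, y, hy, rfl⟩
      obtain ⟨x₁, hx₁, y₁, hy₁, hΩeq⟩ := (hΩ u hu).1
      apply (hΩ u hu).2
      exact ⟨x * x₁, Subgroup.mul_mem _ hx hx₁, y₁ * y, Subgroup.mul_mem _ hy₁ hy,
        by rw [hΩeq]; group⟩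
  -- maximality of Ω u * wo in the double coset of u
  have hmax : ∀ u ∈ WST cs S T, ∀ c ∈ DC cs S T u, cs.length c ≤ cs.length (Ω u * wo) := by
    intro u hu c hc
    have h1 : (c * wo) * wo ∈ DC cs S T u := by
      rw [mul_assoc, hwo2, mul_one]
      exact hc
    obtain ⟨x, hx, y, hy, hdec⟩ := (hA1 u (c * wo)).mpr h1
    have h2 : cs.length (Ω u) ≤ cs.length (c * wo) :=
      (hΩ u hu).2 (c * wo) ⟨x, hx, y, hy, hdec⟩
    have e1 := length_mul_wo cs hwo c
    have e2 := length_mul_wo cs hwo (Ω u)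
    omega
  -- descent properties of Ω u * wo
  have hdesc : ∀ u ∈ WST cs S T,
      (∀ i ∈ S, cs.length (cs.simple i * (Ω u * wo)) < cs.length (Ω u * wo)) ∧
      (∀ i ∈ T, cs.length ((Ω u * wo) * cs.simple i) < cs.length (Ω u * wo)) := by
    intro u hu
    obtain ⟨x, hx, y, hy, hMeq⟩ := hMuDC u hu
    constructor
    · intro i hi
      have h1 : cs.simple i * (Ω u * wo) ∈ DC cs S T u := by
        rw [hMeq]
        exact ⟨cs.simple i * x, Subgroup.mul_mem _ (simple_mem_wpar cs hi) hx, y, hy, by group⟩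
      exact lt_of_le_of_ne (hmax u hu _ h1) (cs.length_simple_mul_ne (Ω u * wo) i)
    · intro i hi
      have h1 : (Ω u * wo) * cs.simple i ∈ DC cs S T u := by
        rw [hMeq]
        exact ⟨x, hx, y * cs.simple i, Subgroup.mul_mem _ hy (simple_mem_wpar cs hi), by group⟩
      exact lt_of_le_of_ne (hmax u hu _ h1) (cs.length_mul_simple_ne (Ω u * wo) i)
  refine ⟨⟨fun u hu => hmaps u hu, ?_, ?_⟩, ?_⟩
  · -- injectivity
    intro u hu u' hu' heq
    have h1 := hMuDC u hu
    have h2 := hMuDC u' hu'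
    rw [heq] at h1
    have hDC : DC cs S T u = DC cs S T u' := by
      rw [← dc_eq cs S T h1, dc_eq cs S T h2]
    have hu'mem : u' ∈ DC cs S T u := by
      rw [hDC]
      exact self_mem_dc cs S T u'
    exact min_unique cs S T hu hu' hu'mem
  · -- surjectivity
    intro v hv
    obtain ⟨u, huDC, humin⟩ := exists_min_dc cs S T (v * wo)
    have huWST : u ∈ WST cs S T := by
      constructor
      · exact ⟨1, Subgroup.one_mem _, 1, Subgroup.one_mem _, by group⟩
      · rintro c ⟨x, hx, y, hy, rfl⟩
        apply humin
        rw [← dc_eq cs S T huDC]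
        exact ⟨x, hx, y, hy, rfl⟩
    refine ⟨u, huWST, ?_⟩
    have hvwo : v * wo ∈ DC cs S T u := by
      rw [dc_eq cs S T huDC]
      exact self_mem_dc cs S T (v * wo)
    obtain ⟨x₂, hx₂, y₂, hy₂, hveq⟩ := (hA1 u v).mpr hvwo
    obtain ⟨x₁, hx₁, y₁, hy₁, hΩeq⟩ := (hΩ u huWST).1
    have hΩmem : Ω u ∈ DC cs S Θ v := by
      refine ⟨x₁ * x₂⁻¹, Subgroup.mul_mem _ hx₁ (Subgroup.inv_mem _ hx₂),
        y₂⁻¹ * y₁, Subgroup.mul_mem _ (Subgroup.inv_mem _ hy₂) hy₁, ?_⟩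
      rw [hΩeq, hveq]
      group
    exact (min_unique cs S Θ hv (hmaps u huWST) hΩmem).symm
  · -- order reversal
    intro u hu u' hu' hle
    rw [bruhatLE_iff_rle] at hle ⊢
    have h1 : Rle cs u' (Ω u' * wo) := rle_wst_le_dc cs S T hu' (hMuDC u' hu')
    have h2 : Rle cs u (Ω u' * wo) := rle_trans cs hle h1
    obtain ⟨x, hx, y, hy, hMeq⟩ := hMuDC u hu
    have h3 : Rle cs (Ω u * wo) (Ω u' * wo) := by
      rw [hMeq]
      exact rle_max cs S T (hdesc u' hu').1 (hdesc u' hu').2 h2 x hx y hy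
    have h4 := rle_wo_reverse cs hwo h3
    rwa [mul_assoc, mul_assoc, hwo2, mul_one, mul_one] at h4
end

section
/- In a Coxeter group W, for any w ∈ W with a fixed reduced expression, every element w' ≤ w in Bruhat order is represented by a distinguished subexpression: a sequence w_0 = e, w_1, ..., w_r with w_i w_{i-1}^{-1} ∈ {e, s_i} and w_i ≤ s_i w_{i-1} for all i, ending at w_r = w'. -/
open List CoxeterSystem
open scoped Classical

namespace DeodharAux

variable {B W : Type*} [Group W] {M : CoxeterMatrix B} (cs : CoxeterSystem M W)

local prefix:100 "s" => cs.simple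
local prefix:100 "π" => cs.wordProd
local prefix:100 "ℓ" => cs.length
local prefix:100 "ris" => cs.rightInvSeq

/-- sign-flip count as a product in ℤˣ -/
noncomputable def flipSign (t : W) (L : List W) : ℤˣ :=
  (L.map (fun u => if t = u then (-1 : ℤˣ) else 1)).prod

lemma flipSign_nil (t : W) : flipSign t ([] : List W) = 1 := rfl

lemma flipSign_cons (t u : W) (L : List W) :
    flipSign t (u :: L) = (if t = u then (-1:ℤˣ) else 1) * flipSign t L := by
  unfold flipSign
  rw [List.map_cons, List.prod_cons]

lemma flipSign_append (t : W) (L L' : List W) :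
    flipSign t (L ++ L') = flipSign t L * flipSign t L' := by
  unfold flipSign
  rw [List.map_append, List.prod_append]

lemma flipSign_reverse (t : W) (L : List W) : flipSign t L.reverse = flipSign t L := by
  unfold flipSign
  rw [List.map_reverse, List.prod_reverse]

lemma flipSign_eq_one_of_not_mem {t : W} {L : List W} (h : t ∉ L) : flipSign t L = 1 := by
  unfold flipSign
  apply List.prod_eq_one
  intro x hx
  obtain ⟨u, hu, rfl⟩ := List.mem_map.mp hx
  rw [if_neg]
  rintro rfl; exact h hu

lemma mem_of_flipSign_ne_one {t : W} {L : List W} (h : flipSign t L ≠ 1) : t ∈ L := by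
  by_contra hn; exact h (flipSign_eq_one_of_not_mem hn)

lemma flipSign_period (t : W) (f : ℕ → W) (m : ℕ) (hf : ∀ r, f (m + r) = f r) :
    flipSign t ((List.range (m + m)).map f) = 1 := by
  rw [List.range_add, List.map_append, flipSign_append, List.map_map]
  have h : (List.range m).map (f ∘ fun x => m + x) = (List.range m).map f :=
    List.map_congr_left (fun r _ => hf r)
  rw [h]
  exact Int.units_mul_self _

/-- the basic sign-flipping involution attached to a simple reflection -/
noncomputable def dsig (i : B) : Function.End (W × ℤˣ) :=
  fun p => (s i * p.1 * s i, if p.1 = s i then -p.2 else p.2)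

lemma ris_cons (i : B) (ω : List B) :
    ris (i :: ω) = ((π ω)⁻¹ * s i * π ω) :: ris ω := rfl

lemma prod_map_dsig (ω : List B) (p : W × ℤˣ) :
    ((ω.map (dsig cs)).prod : Function.End (W × ℤˣ)) p
      = (π ω * p.1 * (π ω)⁻¹, flipSign p.1 (ris ω) * p.2) := by
  induction ω generalizing p with
  | nil =>
    simp only [List.map_nil, List.prod_nil, cs.wordProd_nil, one_mul, inv_one, mul_one,
      CoxeterSystem.rightInvSeq_nil, flipSign_nil]
    rfl
  | cons i ω ih =>
    rw [List.map_cons, List.prod_cons]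
    have h0 : ((dsig cs i * (ω.map (dsig cs)).prod : Function.End (W × ℤˣ))) p
        = dsig cs i (((ω.map (dsig cs)).prod : Function.End (W × ℤˣ)) p) := rfl
    rw [h0, ih]
    rw [ris_cons, flipSign_cons, cs.wordProd_cons]
    unfold dsig
    dsimp only
    have hiff : π ω * p.1 * (π ω)⁻¹ = s i ↔ p.1 = (π ω)⁻¹ * s i * π ω := by
      constructor
      · intro h; rw [← h]; group
      · intro h; rw [h]; group
    have hfst : s i * (π ω * p.1 * (π ω)⁻¹) * s i = s i * π ω * p.1 * (s i * π ω)⁻¹ := by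
      rw [mul_inv_rev, cs.inv_simple]
      group
    by_cases hc : p.1 = (π ω)⁻¹ * s i * π ω
    · rw [if_pos (hiff.mpr hc), if_pos hc, hfst]
      refine Prod.ext rfl ?_
      dsimp only
      rw [neg_one_mul, neg_mul]
    · rw [if_neg (fun h => hc (hiff.mp h)), if_neg hc, hfst]
      refine Prod.ext rfl ?_
      dsimp only
      rw [one_mul]

lemma prod_map_alternatingWord {M₀ : Type*} [Monoid M₀] (f : B → M₀) (i i' : B) (m : ℕ) :
    ((alternatingWord i i' (2 * m)).map f).prod = (f i * f i') ^ m := by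
  induction m with
  | zero => simp [alternatingWord]
  | succ m ih =>
    have h1 : 2 * (m + 1) = (2 * m) + 1 + 1 := by ring
    rw [h1, alternatingWord_succ', alternatingWord_succ']
    have he : ¬ Even (2*m + 1) := by simp [Nat.even_add_one]
    have he2 : Even (2*m) := even_two_mul m
    rw [if_neg he, if_pos he2]
    rw [List.map_cons, List.map_cons, List.prod_cons, List.prod_cons, ih]
    rw [pow_succ', ← mul_assoc]

/-- the key computation: entries of the right inversion sequence of an alternating word -/
lemma alt_conj_formula (i i' : B) (r : ℕ) :
    (π (alternatingWord i i' r))⁻¹ * s (if Even r then i' else i) * π (alternatingWord i i' r)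
      = (s i' * s i) ^ r * s i' := by
  have hsc : ∀ k : ℕ, s i' * (s i * s i') ^ k = (s i' * s i) ^ k * s i' := by
    intro k
    induction k with
    | zero => simp
    | succ k ih =>
      rw [pow_succ, ← mul_assoc, ih, pow_succ]
      group
  have hinv : ∀ k : ℕ, ((s i * s i') ^ k)⁻¹ = (s i' * s i) ^ k := by
    intro k
    rw [← inv_pow, mul_inv_rev, cs.inv_simple, cs.inv_simple]
  rcases Nat.even_or_odd r with he | ho
  · obtain ⟨j, rfl⟩ := he
    have hj : (j + j) / 2 = j := by omega
    rw [cs.prod_alternatingWord_eq_mul_pow, if_pos ⟨j, rfl⟩, if_pos ⟨j, rfl⟩, one_mul, hj]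
    rw [hinv, mul_assoc, hsc, pow_add, mul_assoc]
  · obtain ⟨j, rfl⟩ := ho
    have hj : (2*j + 1) / 2 = j := by omega
    have hne : ¬ Even (2*j+1) := by simp [Nat.even_add_one]
    rw [cs.prod_alternatingWord_eq_mul_pow, if_neg hne, if_neg hne, hj]
    rw [mul_inv_rev, hinv, cs.inv_simple]
    rw [mul_assoc ((s i' * s i)^j * s i'), hsc]
    have h2 : (2 * j + 1) = (j + 1) + j := by omega
    rw [h2, pow_add, pow_succ]
    group

lemma ris_alternatingWord (i i' : B) (n : ℕ) :
    ris (alternatingWord i i' n)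
      = ((List.range n).reverse).map (fun r => (s i' * s i) ^ r * s i') := by
  induction n with
  | zero => simp [alternatingWord]
  | succ n ih =>
    rw [alternatingWord_succ', ris_cons, ih, List.range_succ, List.reverse_append]
    simp only [List.reverse_singleton, List.singleton_append, List.map_cons]
    congr 1
    exact alt_conj_formula cs i i'  n

lemma flipSign_ris_braidWord (t : W) (i i' : B) :
    flipSign t (ris (alternatingWord i i' (2 * M i i'))) = 1 := by
  rw [ris_alternatingWord, List.map_reverse, flipSign_reverse]
  have h2 : 2 * M i i' = M i i' + M i i' := by omega
  rw [h2]
  apply flipSign_period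
  intro r
  rw [pow_add, cs.simple_mul_simple_pow' i i', one_mul]

lemma dsig_liftable : M.IsLiftable (dsig cs : B → Function.End (W × ℤˣ)) := by
  intro i i'
  have h := prod_map_alternatingWord (dsig cs) i i' (M i i')
  rw [← h]
  funext p
  rw [prod_map_dsig]
  have hprod : π (alternatingWord i i' (2 * M i i')) = 1 := by
    rw [cs.prod_alternatingWord_eq_mul_pow]
    rw [if_pos (even_two_mul _), one_mul]
    have h3 : 2 * M i i' / 2 = M i i' := by omega
    rw [h3, cs.simple_mul_simple_pow]
  rw [hprod, flipSign_ris_braidWord]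
  show (_, _) = p
  simp

/-- the sign homomorphism -/
noncomputable def dphi : W →* Function.End (W × ℤˣ) :=
  cs.lift ⟨dsig cs, dsig_liftable cs⟩

lemma dphi_simple (i : B) : dphi cs (s i) = dsig cs i :=
  cs.lift_apply_simple (dsig_liftable cs) i

lemma dphi_wordProd (ω : List B) : dphi cs (π ω) = (ω.map (dsig cs)).prod := by
  unfold CoxeterSystem.wordProd
  rw [MonoidHom.map_list_prod, List.map_map]
  congr 1
  apply List.map_congr_left
  intro i _
  exact dphi_simple cs i

/-- the sign of `t` at `w` -/
noncomputable def eta (w t : W) : ℤˣ := ((dphi cs w) (t, 1)).2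

lemma eta_eq_flipSign (ω : List B) (t : W) : eta cs (π ω) t = flipSign t (ris ω) := by
  unfold eta
  rw [dphi_wordProd, prod_map_dsig]
  simp

lemma dphi_apply (w t : W) (ε : ℤˣ) : dphi cs w (t, ε) = (w * t * w⁻¹, eta cs w t * ε) := by
  obtain ⟨ω, rfl⟩ := cs.wordProd_surjective w
  rw [dphi_wordProd, prod_map_dsig, eta_eq_flipSign]

lemma eta_mul (u v t : W) : eta cs (u * v) t = eta cs v t * eta cs u (v * t * v⁻¹) := by
  unfold eta
  rw [map_mul]
  show (dphi cs u ((dphi cs v) (t, 1))).2 = _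
  rw [dphi_apply, dphi_apply]
  show eta cs u (v * t * v⁻¹) * (eta cs v t * 1) = _
  rw [mul_one]
  exact mul_comm _ _

lemma eta_one (t : W) : eta cs 1 t = 1 := by
  unfold eta
  rw [map_one]
  rfl

lemma eta_simple_self (i : B) : eta cs (s i) (s i) = -1 := by
  unfold eta
  rw [dphi_simple]
  show (dsig cs i (s i, 1)).2 = -1
  simp [dsig]

lemma eta_reflection_self {t : W} (ht : cs.IsReflection t) : eta cs t t = -1 := by
  obtain ⟨u, i, rfl⟩ := ht
  set t := u * s i * u⁻¹ with hts
  have hre : t = u * (s i * u⁻¹) := by rw [hts]; group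
  have h1 : eta cs (u * (s i * u⁻¹)) t = eta cs (s i * u⁻¹) t *
      eta cs u ((s i * u⁻¹) * t * (s i * u⁻¹)⁻¹) := eta_mul cs u (s i * u⁻¹) t
  have h2 : (s i * u⁻¹) * t * (s i * u⁻¹)⁻¹ = s i := by
    rw [hts, mul_inv_rev, cs.inv_simple, inv_inv]
    simp only [mul_assoc, inv_mul_cancel_left]
    rw [cs.simple_mul_simple_cancel_left]
  have h3 : u⁻¹ * t * (u⁻¹)⁻¹ = s i := by
    rw [hts, inv_inv]
    simp only [mul_assoc, inv_mul_cancel_left]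
    simp
  have h4 : eta cs (s i * u⁻¹) t = eta cs u⁻¹ t * eta cs (s i) (u⁻¹ * t * (u⁻¹)⁻¹) :=
    eta_mul cs (s i) u⁻¹ t
  have h5 : eta cs u⁻¹ t * eta cs u (s i) = 1 := by
    have h6 : eta cs (u * u⁻¹) t = eta cs u⁻¹ t * eta cs u (u⁻¹ * t * (u⁻¹)⁻¹) :=
      eta_mul cs u u⁻¹ t
    rw [mul_inv_cancel, eta_one, h3] at h6
    exact h6.symm
  calc eta cs t t
      = eta cs (u * (s i * u⁻¹)) t := by rw [← hre]
    _ = eta cs (s i * u⁻¹) t * eta cs u ((s i * u⁻¹) * t * (s i * u⁻¹)⁻¹) := h1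
    _ = (eta cs u⁻¹ t * eta cs (s i) (u⁻¹ * t * (u⁻¹)⁻¹)) * eta cs u (s i) := by rw [h2, h4]
    _ = (eta cs u⁻¹ t * -1) * eta cs u (s i) := by rw [h3, eta_simple_self]
    _ = eta cs u⁻¹ t * eta cs u (s i) * -1 := by rw [mul_right_comm]
    _ = -1 := by rw [h5, one_mul]

lemma eta_mul_reflection {t : W} (ht : cs.IsReflection t) (w : W) :
    eta cs (w * t) t = - eta cs w t := by
  rw [eta_mul]
  have h1 : t * t * t⁻¹ = t := by rw [ht.mul_self, one_mul, ht.inv]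
  rw [h1, eta_reflection_self cs ht]
  rw [neg_one_mul, ← mul_neg_one, mul_comm]

/-- Strong exchange: membership in the right inversion sequence -/
lemma mem_rightInvSeq_of_isRightInversion {ω : List B} (hω : cs.IsReduced ω) {t : W}
    (ht : cs.IsReflection t) (hlt : ℓ (π ω * t) < ℓ (π ω)) : t ∈ ris ω := by
  by_contra hn
  have h1 : eta cs (π ω) t = 1 := by
    rw [eta_eq_flipSign]
    exact flipSign_eq_one_of_not_mem hn
  obtain ⟨ω', hω', hw'⟩ := cs.exists_reduced_word' (π ω * t)
  have h2 : eta cs (π ω * t) t = -1 := by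
    rw [eta_mul_reflection cs ht, h1]
  have h3 : t ∈ ris ω' := by
    apply mem_of_flipSign_ne_one
    rw [← eta_eq_flipSign, ← hw', h2]
    decide
  have h4 := cs.isRightInversion_of_mem_rightInvSeq hω' h3
  rw [← hw'] at h4
  have h5 : ℓ (π ω * t * t) < ℓ (π ω * t) := h4.2
  rw [mul_assoc, ht.mul_self, mul_one] at h5
  omega

/-- Strong exchange property, packaged -/
lemma strong_exchange {ω : List B} (hω : cs.IsReduced ω) {t : W}
    (ht : cs.IsReflection t) (hlt : ℓ (π ω * t) < ℓ (π ω)) :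
    ∃ ω', ω'.Sublist ω ∧ ω'.length + 1 = ω.length ∧ π ω' = π ω * t := by
  have hmem := mem_rightInvSeq_of_isRightInversion cs hω ht hlt
  obtain ⟨⟨j, hj⟩, hget⟩ := List.mem_iff_get.mp hmem
  have hjlen : j < ω.length := by
    have := cs.length_rightInvSeq ω
    omega
  have hgetd : (ris ω).getD j 1 = t := by
    rw [List.getD_eq_getElem _ _ hj]
    rw [← hget]
    simp
  refine ⟨ω.eraseIdx j, List.eraseIdx_sublist ω j, ?_, ?_⟩
  · rw [List.length_eraseIdx_add_one hjlen]
  · rw [← cs.wordProd_mul_getD_rightInvSeq ω j, hgetd]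


lemma isReduced_nil : cs.IsReduced ([] : List B) := by
  simp [CoxeterSystem.IsReduced]

lemma sublist_concat_cases {α : Type*} {l' l : List α} {x : α} (h : l'.Sublist (l ++ [x])) :
    l'.Sublist l ∨ ∃ r, l' = r ++ [x] ∧ r.Sublist l := by
  have h2 : l'.reverse.Sublist (x :: l.reverse) := by
    have := h.reverse
    rwa [List.reverse_append, List.reverse_singleton, List.singleton_append] at this
  rcases List.sublist_cons_iff.mp h2 with h3 | ⟨r, hr, h3⟩
  · left
    have := h3.reverse
    rwa [List.reverse_reverse, List.reverse_reverse] at this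
  · right
    refine ⟨r.reverse, ?_, ?_⟩
    · have : l'.reverse.reverse = (x :: r).reverse := by rw [hr]
      rwa [List.reverse_reverse, List.reverse_cons] at this
    · have := h3.reverse
      rwa [List.reverse_reverse] at this

/-- Deletion property: every word has a reduced sublist with the same product. -/
lemma exists_reduced_sublist : ∀ (n : ℕ) (ω : List B), ω.length ≤ n →
    ∃ ω', ω'.Sublist ω ∧ cs.IsReduced ω' ∧ π ω' = π ω := by
  intro n
  induction n with
  | zero =>
    intro ω hω
    have : ω = [] := List.eq_nil_of_length_eq_zero (by omega)
    subst this
    exact ⟨[], List.Sublist.refl _, isReduced_nil cs, rfl⟩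
  | succ n ih =>
    intro ω hω
    by_cases hred : cs.IsReduced ω
    · exact ⟨ω, List.Sublist.refl _, hred, rfl⟩
    · have hne : ω ≠ [] := by rintro rfl; exact hred (isReduced_nil cs)
      have hlen1 : 1 ≤ ω.length := List.length_pos_iff.mpr hne
      have hP : ∃ k, ¬ cs.IsReduced (ω.take (k+1)) := by
        refine ⟨ω.length - 1, ?_⟩
        have h9 : ω.length - 1 + 1 = ω.length := by omega
        rw [h9, List.take_length]
        exact hred
      set k := Nat.find hP with hk
      have hk1 : ¬ cs.IsReduced (ω.take (k+1)) := Nat.find_spec hP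
      have hkred : cs.IsReduced (ω.take k) := by
        rcases Nat.eq_zero_or_pos k with h0 | h0
        · rw [h0, List.take_zero]; exact isReduced_nil cs
        · have := Nat.find_min hP (show k - 1 < k by omega)
          have h9 : k - 1 + 1 = k := by omega
          rw [h9] at this
          exact not_not.mp this
      have hklt : k < ω.length := by
        have h9 : k ≤ ω.length - 1 := by
          apply Nat.find_le
          have h8 : ω.length - 1 + 1 = ω.length := by omega
          rw [h8, List.take_length]
          exact hred
        omega
      have htake : ω.take (k+1) = ω.take k ++ [ω.get ⟨k, hklt⟩] := by
        rw [List.take_succ, List.getElem?_eq_getElem hklt]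
        rfl
      have hlentake : (ω.take k).length = k := by rw [List.length_take]; omega
      have hprod1 : π (ω.take (k+1)) = π (ω.take k) * s (ω.get ⟨k, hklt⟩) := by
        rw [htake, cs.wordProd_append, cs.wordProd_singleton]
      have hlk : ℓ (π (ω.take k)) = k := by
        have := hkred; unfold CoxeterSystem.IsReduced at this; rw [this, hlentake]
      have hdrop : ℓ (π (ω.take k) * s (ω.get ⟨k, hklt⟩)) < ℓ (π (ω.take k)) := by
        rcases cs.length_mul_simple (π (ω.take k)) (ω.get ⟨k, hklt⟩) with h1 | h1
        · exfalso
          apply hk1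
          unfold CoxeterSystem.IsReduced
          rw [hprod1, h1, hlk, List.length_take]
          omega
        · omega
      obtain ⟨ρ, hρsub, hρlen, hρprod⟩ :=
        strong_exchange cs hkred (cs.isReflection_simple (ω.get ⟨k, hklt⟩)) hdrop
      have hωeq : ω = ω.take (k+1) ++ ω.drop (k+1) := (List.take_append_drop _ _).symm
      have hsub2 : (ρ ++ ω.drop (k+1)).Sublist ω := by
        conv_rhs => rw [hωeq]
        apply List.Sublist.append _ (List.Sublist.refl _)
        refine hρsub.trans ?_
        rw [htake]
        exact List.sublist_append_left _ _
      have hprod2 : π (ρ ++ ω.drop (k+1)) = π ω := by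
        rw [cs.wordProd_append, hρprod, ← hprod1, ← cs.wordProd_append, ← hωeq]
      have hlen2 : (ρ ++ ω.drop (k+1)).length ≤ n := by
        rw [List.length_append, List.length_drop]
        rw [hlentake] at hρlen
        omega
      obtain ⟨ω', h1, h2, h3⟩ := ih (ρ ++ ω.drop (k+1)) hlen2
      exact ⟨ω', h1.trans hsub2, h2, by rw [h3, hprod2]⟩

/-- One step of the Bruhat order. -/
def BStep (v w : W) : Prop := ∃ t, cs.IsReflection t ∧ w = v * t ∧ ℓ v < ℓ w

/-- Bruhat order via reflection chains. -/
def BLe : W → W → Prop := Relation.ReflTransGen (BStep cs)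

/-- The lifting ("property Z") lemma. -/
lemma ble_mul_simple (i : B) {v w : W} (h : BLe cs v w) :
    BLe cs (v * s i) w ∨ BLe cs (v * s i) (w * s i) := by
  induction h with
  | refl => exact Or.inr Relation.ReflTransGen.refl
  | @tail w' w hchain hstep ih =>
    obtain ⟨t, ht, hw, hlt⟩ := hstep
    subst hw
    have key : BLe cs (w' * s i) (w' * t) ∨ BLe cs (w' * s i) (w' * t * s i) := by
      rcases cs.length_mul_simple w' i with hx | hx
      · by_cases hx2 : ℓ (w' * s i) < ℓ (w' * t * s i)
        · right
          apply Relation.ReflTransGen.single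
          refine ⟨s i * t * s i, ?_, ?_, hx2⟩
          · have h5 := ht.conj (s i)
            rwa [cs.inv_simple] at h5
          · simp only [mul_assoc, cs.simple_mul_simple_cancel_left]
        · push_neg at hx2
          have hodd := ht.odd_length
          obtain ⟨kk, hkk⟩ := hodd
          have hpar : ℓ (w' * t) % 2 = (ℓ w' + ℓ t) % 2 := cs.length_mul_mod_two w' t
          rcases cs.length_mul_simple (w' * t) i with hy | hy
          · omega
          · have hxeq : ℓ (w' * s i) = ℓ (w' * t) := by omega
            obtain ⟨ρ, hρred, hρπ⟩ := cs.exists_reduced_word' (w' * t * s i)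
            have hμprod : π (ρ ++ [i]) = w' * t := by
              rw [cs.wordProd_append, cs.wordProd_singleton, ← hρπ,
                cs.simple_mul_simple_cancel_right]
            have hρlen : ρ.length = ℓ (w' * t * s i) := by
              have := hρred; unfold CoxeterSystem.IsReduced at this
              rw [← hρπ] at this; omega
            have hμred : cs.IsReduced (ρ ++ [i]) := by
              unfold CoxeterSystem.IsReduced
              rw [hμprod, List.length_append, List.length_singleton]
              omega
            have hlt2 : ℓ (π (ρ ++ [i]) * t) < ℓ (π (ρ ++ [i])) := by
              rw [hμprod, mul_assoc, ht.mul_self, mul_one]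
              exact hlt
            obtain ⟨σ, hσsub, hσlen, hσprod⟩ := strong_exchange cs hμred ht hlt2
            rw [hμprod, mul_assoc, ht.mul_self, mul_one] at hσprod
            rcases sublist_concat_cases hσsub with hcase | ⟨τ, rfl, hτ⟩
            · have hσρ : σ = ρ := by
                apply hcase.eq_of_length
                rw [List.length_append, List.length_singleton] at hσlen
                omega
              left
              rw [hσρ, ← hρπ] at hσprod
              have h10 : w' * s i = w' * t := by
                conv_lhs => rw [← hσprod]
                exact cs.simple_mul_simple_cancel_right i
              rw [h10]
              exact Relation.ReflTransGen.refl
            · exfalso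
              have h7 : π (τ ++ [i]) = w' := hσprod
              rw [cs.wordProd_append, cs.wordProd_singleton] at h7
              have h8 : π τ = w' * s i := by
                rw [← h7, cs.simple_mul_simple_cancel_right]
              have h9 : ℓ (π τ) ≤ τ.length := cs.length_wordProd_le τ
              rw [h8] at h9
              rw [List.length_append, List.length_singleton, List.length_append,
                List.length_singleton] at hσlen
              omega
      · left
        have s1 : BStep cs (w' * s i) w' :=
          ⟨s i, cs.isReflection_simple i, (cs.simple_mul_simple_cancel_right i).symm, by omega⟩
        exact (Relation.ReflTransGen.single s1).tail ⟨t, ht, rfl, hlt⟩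
    rcases ih with ih | ih
    · left; exact ih.tail ⟨t, ht, rfl, hlt⟩
    · rcases key with hkey | hkey
      · left; exact ih.trans hkey
      · right; exact ih.trans hkey

/-- subword of a reduced word implies Bruhat-below -/
lemma ble_of_sublist : ∀ {u u' : List B}, cs.IsReduced u → u'.Sublist u →
    BLe cs (π u') (π u) := by
  intro u
  induction u using List.reverseRecOn with
  | nil =>
    intro u' _ h
    rw [List.sublist_nil.mp h]
    exact Relation.ReflTransGen.refl
  | append_singleton u₀ j ih =>
    intro u' hred hsub
    have hred₀ : cs.IsReduced u₀ := by
      have h1 := hred.take u₀.length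
      rwa [List.take_left] at h1
    have hstep : BStep cs (π u₀) (π (u₀ ++ [j])) := by
      refine ⟨s j, cs.isReflection_simple j,
        by rw [cs.wordProd_append, cs.wordProd_singleton], ?_⟩
      have h2 : ℓ (π u₀) = u₀.length := hred₀
      have h3 : ℓ (π (u₀ ++ [j])) = u₀.length + 1 := by
        have := hred
        unfold CoxeterSystem.IsReduced at this
        rw [List.length_append, List.length_singleton] at this
        exact this
      omega
    rcases sublist_concat_cases hsub with hcase | ⟨r, rfl, hr⟩
    · exact (ih hred₀ hcase).tail hstep
    · have hble := ih hred₀ hr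
      rw [cs.wordProd_append, cs.wordProd_singleton]
      rcases ble_mul_simple cs j hble with h | h
      · exact h.tail hstep
      · rw [cs.wordProd_append, cs.wordProd_singleton]
        exact h

/-- The subword property: any Bruhat-smaller element appears as a subword of
any fixed reduced word. -/
lemma exists_sublist_of_ble {v w : W} (h : BLe cs v w) :
    ∀ ω : List B, cs.IsReduced ω → π ω = w → ∃ ω', ω'.Sublist ω ∧ π ω' = v := by
  induction h with
  | refl => exact fun ω _ hω => ⟨ω, List.Sublist.refl _, hω⟩
  | @tail w₁ w₂ hchain hstep ih =>
    intro ω hred hω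
    obtain ⟨t, ht, hw, hlt⟩ := hstep
    have hlt2 : ℓ (π ω * t) < ℓ (π ω) := by
      rw [hω, hw, mul_assoc, ht.mul_self, mul_one]
      rw [← hw]
      exact hlt
    obtain ⟨σ, hσsub, _, hσprod⟩ := strong_exchange cs hred ht hlt2
    obtain ⟨σ', hσ'sub, hσ'red, hσ'prod⟩ := exists_reduced_sublist cs σ.length σ (le_refl _)
    have hπσ' : π σ' = w₁ := by
      rw [hσ'prod, hσprod, hω, hw, mul_assoc, ht.mul_self, mul_one]
    obtain ⟨ω', h1, h2⟩ := ih σ' hσ'red hπσ'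
    exact ⟨ω', h1.trans (hσ'sub.trans hσsub), h2⟩

lemma bruhatLE_of_ble {v w : W} (h : BLe cs v w) : BruhatLE cs v w := by
  obtain ⟨ω, hred, hπ⟩ := cs.exists_reduced_word' w
  obtain ⟨ω', hsub, hprod⟩ := exists_sublist_of_ble cs h ω hred hπ.symm
  exact ⟨ω, hred, hπ.symm, ω', hsub, hprod⟩

lemma ble_of_bruhatLE {v w : W} (h : BruhatLE cs v w) : BLe cs v w := by
  obtain ⟨l, hred, hprod, l', hsub, hprod'⟩ := h
  rw [← hprod, ← hprod']
  exact ble_of_sublist cs hred hsub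

lemma bruhatLE_subword {v w : W} (h : BruhatLE cs v w) {ω : List B} (hred : cs.IsReduced ω)
    (hπ : π ω = w) : ∃ ω', ω'.Sublist ω ∧ π ω' = v :=
  exists_sublist_of_ble cs (ble_of_bruhatLE cs h) ω hred hπ

lemma bruhatLE_refl (v : W) : BruhatLE cs v v :=
  bruhatLE_of_ble cs Relation.ReflTransGen.refl

/-- `v ≤ s i * v` when the length goes up -/
lemma bruhatLE_mul_simple_left {v : W} (i : B) (h : ℓ v < ℓ (s i * v)) :
    BruhatLE cs v (s i * v) := by
  obtain ⟨ρ, hred, hπ⟩ := cs.exists_reduced_word' v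
  have hred' : cs.IsReduced (i :: ρ) := by
    unfold CoxeterSystem.IsReduced
    rw [cs.wordProd_cons, ← hπ, List.length_cons]
    have h2 : ℓ v = ρ.length := by rw [hπ]; exact hred
    rcases cs.length_simple_mul v i with h1 | h1 <;> omega
  exact ⟨i :: ρ, hred', by rw [cs.wordProd_cons, ← hπ], ρ, List.sublist_cons_self i ρ, hπ.symm⟩

/-- single Bruhat step down for left multiplication by a simple reflection -/
lemma ble_simple_mul_left_down {v : W} (i : B) (h : ℓ (s i * v) < ℓ v) :
    BLe cs (s i * v) v := by
  apply Relation.ReflTransGen.single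
  refine ⟨v⁻¹ * s i * v, ⟨v⁻¹, i, by rw [inv_inv]⟩, ?_, h⟩
  simp only [mul_assoc, mul_inv_cancel_left, cs.simple_mul_simple_cancel_left]

/-- single Bruhat step up for left multiplication by a simple reflection -/
lemma ble_simple_mul_left_up {v : W} (i : B) (h : ℓ v < ℓ (s i * v)) :
    BLe cs v (s i * v) := by
  apply Relation.ReflTransGen.single
  refine ⟨v⁻¹ * s i * v, ⟨v⁻¹, i, by rw [inv_inv]⟩, ?_, h⟩
  simp only [mul_assoc, mul_inv_cancel_left]

/-- Left lifting, downward case. -/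
lemma bruhat_lift_down {w' w : W} (i : B) (h : BruhatLE cs w' w)
    (hw : ℓ (s i * w) < ℓ w) (hw' : ℓ (s i * w') < ℓ w') :
    BruhatLE cs (s i * w') (s i * w) := by
  obtain ⟨ρ, hρred, hρπ⟩ := cs.exists_reduced_word' (s i * w)
  have hcons : π (i :: ρ) = w := by
    rw [cs.wordProd_cons, ← hρπ, cs.simple_mul_simple_cancel_left]
  have hconsred : cs.IsReduced (i :: ρ) := by
    unfold CoxeterSystem.IsReduced
    rw [hcons, List.length_cons]
    have h2 : ℓ (s i * w) = ρ.length := by rw [hρπ]; exact hρred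
    rcases cs.length_simple_mul w i with h1 | h1 <;> omega
  obtain ⟨sub, hsub, hsubπ⟩ := bruhatLE_subword cs h hconsred hcons
  rcases List.sublist_cons_iff.mp hsub with hs | ⟨r, rfl, hr⟩
  · have h1 : BruhatLE cs w' (s i * w) := ⟨ρ, hρred, hρπ.symm, sub, hs, hsubπ⟩
    exact bruhatLE_of_ble cs
      ((ble_simple_mul_left_down cs i hw').trans (ble_of_bruhatLE cs h1))
  · rw [cs.wordProd_cons] at hsubπ
    have h1 : π r = s i * w' := by rw [← hsubπ, cs.simple_mul_simple_cancel_left]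
    exact ⟨ρ, hρred, hρπ.symm, r, hr, h1⟩

/-- Left lifting, upward case. -/
lemma bruhat_lift_up {w' w : W} (i : B) (h : BruhatLE cs w' w)
    (hw : ℓ (s i * w) < ℓ w) (hw' : ℓ w' < ℓ (s i * w')) :
    BruhatLE cs w' (s i * w) := by
  obtain ⟨ρ, hρred, hρπ⟩ := cs.exists_reduced_word' (s i * w)
  have hcons : π (i :: ρ) = w := by
    rw [cs.wordProd_cons, ← hρπ, cs.simple_mul_simple_cancel_left]
  have hconsred : cs.IsReduced (i :: ρ) := by
    unfold CoxeterSystem.IsReduced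
    rw [hcons, List.length_cons]
    have h2 : ℓ (s i * w) = ρ.length := by rw [hρπ]; exact hρred
    rcases cs.length_simple_mul w i with h1 | h1 <;> omega
  obtain ⟨sub, hsub, hsubπ⟩ := bruhatLE_subword cs h hconsred hcons
  rcases List.sublist_cons_iff.mp hsub with hs | ⟨r, rfl, hr⟩
  · exact ⟨ρ, hρred, hρπ.symm, sub, hs, hsubπ⟩
  · rw [cs.wordProd_cons] at hsubπ
    have h1 : π r = s i * w' := by rw [← hsubπ, cs.simple_mul_simple_cancel_left]
    have h2 : BruhatLE cs (s i * w') (s i * w) := ⟨ρ, hρred, hρπ.symm, r, hr, h1⟩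
    exact bruhatLE_of_ble cs
      ((ble_simple_mul_left_up cs i hw').trans (ble_of_bruhatLE cs h2))

end DeodharAux

/-- `c` is a distinguished subexpression of the reduced word `s_r ⋯ s_1`, where `s_i` is the
simple reflection attached to the `(i-1)`-th entry of the list `l` (so the word read
right-to-left is `l`): `c 0 = 1`, at each step `c (i+1) ∈ {c i, s_{i+1} · c i}`, and
`c (i+1) ≤ s_{i+1} · c i` in the Bruhat order. -/
def IsDistinguishedSubexpr {B W : Type*} [Group W] {M : CoxeterMatrix B}
    (cs : CoxeterSystem M W) (l : List B) (c : ℕ → W) : Prop :=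
  c 0 = 1 ∧ ∀ i : ℕ, ∀ h : i < l.length,
    (c (i + 1) = c i ∨ c (i + 1) = cs.simple (l.get ⟨i, h⟩) * c i) ∧
      BruhatLE cs (c (i + 1)) (cs.simple (l.get ⟨i, h⟩) * c i)

/-- (Deodhar) Every element `w' ≤ w` in the Bruhat order is the endpoint of a distinguished
subexpression of a fixed reduced expression `w = s_r ⋯ s_1`. -/
theorem exists_distinguished_subexpression {B W : Type*} [Group W] {M : CoxeterMatrix B}
    (cs : CoxeterSystem M W) (w w' : W) (l : List B)
    (hred : cs.IsReduced l.reverse) (hprod : cs.wordProd l.reverse = w)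
    (h : BruhatLE cs w' w) :
    ∃ c : ℕ → W, IsDistinguishedSubexpr cs l c ∧ c l.length = w' := by
  induction l using List.reverseRecOn generalizing w w' with
  | nil =>
    rw [List.reverse_nil] at hred hprod
    obtain ⟨ω', hsub, hπ⟩ := DeodharAux.bruhatLE_subword cs h hred hprod
    have hnil : ω' = [] := List.sublist_nil.mp hsub
    subst hnil
    rw [cs.wordProd_nil] at hπ
    refine ⟨fun _ => 1, ⟨rfl, ?_⟩, hπ⟩
    intro i hi
    simp at hi
  | append_singleton l₀ b ih =>
    have hrev : (l₀ ++ [b]).reverse = b :: l₀.reverse := by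
      rw [List.reverse_append, List.reverse_singleton, List.singleton_append]
    rw [hrev] at hred hprod
    have hred₁ : cs.IsReduced l₀.reverse := by
      have h1 := hred.drop 1
      simpa using h1
    have hw : w = cs.simple b * cs.wordProd l₀.reverse := by
      rw [← hprod, cs.wordProd_cons]
    have hlenw : cs.length w = l₀.length + 1 := by
      have h1 : cs.IsReduced (b :: l₀.reverse) := hred
      unfold CoxeterSystem.IsReduced at h1
      rw [hprod] at h1
      rw [h1, List.length_cons, List.length_reverse]
    have hlenw₁ : cs.length (cs.wordProd l₀.reverse) = l₀.length := by
      have h1 : cs.IsReduced l₀.reverse := hred₁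
      unfold CoxeterSystem.IsReduced at h1
      rw [h1, List.length_reverse]
    have hsw : cs.simple b * w = cs.wordProd l₀.reverse := by
      rw [hw, cs.simple_mul_simple_cancel_left]
    have hswlt : cs.length (cs.simple b * w) < cs.length w := by
      rw [hsw]; omega
    rcases cs.length_simple_mul w' b with hc | hc
    · -- up case: `ℓ (s b * w') = ℓ w' + 1`, use `w' ≤ w₁` and keep `c` constant at the end
      have h2 : BruhatLE cs w' (cs.wordProd l₀.reverse) := by
        have h3 := DeodharAux.bruhat_lift_up cs b h hswlt (by omega)
        rwa [hsw] at h3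
      obtain ⟨c₀, ⟨hc0, hcstep⟩, hcend⟩ := ih _ _ hred₁ rfl h2
      refine ⟨fun n => if n ≤ l₀.length then c₀ n else w', ⟨?_, ?_⟩, ?_⟩
      · simpa using hc0
      · intro i hi
        have hi' : i < l₀.length + 1 := by
          rw [List.length_append, List.length_singleton] at hi; exact hi
        by_cases hil : i < l₀.length
        · have e1 : (if i + 1 ≤ l₀.length then c₀ (i+1) else w') = c₀ (i+1) := by
            by_cases hb : i + 1 ≤ l₀.length
            · rw [if_pos hb]
            · exfalso; omega
          have e2 : (if i ≤ l₀.length then c₀ i else w') = c₀ i := if_pos (by omega)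
          have e3 : (l₀ ++ [b]).get ⟨i, hi⟩ = l₀.get ⟨i, hil⟩ := by
            simp only [List.get_eq_getElem]
            exact List.getElem_append_left hil
          simp only [e1, e2, e3]
          exact hcstep i hil
        · have hieq : i = l₀.length := by omega
          subst hieq
          have e1 : (if l₀.length + 1 ≤ l₀.length then c₀ (l₀.length+1) else w') = w' :=
            if_neg (by omega)
          have e2 : (if l₀.length ≤ l₀.length then c₀ l₀.length else w') = c₀ l₀.length :=
            if_pos le_rfl
          have e3 : (l₀ ++ [b]).get ⟨l₀.length, hi⟩ = b := by
            simp only [List.get_eq_getElem]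
            exact List.getElem_concat_length rfl _
          simp only [e1, e2, e3]
          rw [hcend]
          exact ⟨Or.inl rfl, DeodharAux.bruhatLE_mul_simple_left cs b (by omega)⟩
      · rw [List.length_append, List.length_singleton]
        exact if_neg (by omega)
    · -- down case: `ℓ (s b * w') < ℓ w'`, use `s b * w' ≤ w₁` and multiply at the end
      have h2 : BruhatLE cs (cs.simple b * w') (cs.wordProd l₀.reverse) := by
        have h3 := DeodharAux.bruhat_lift_down cs b h hswlt (by omega)
        rwa [hsw] at h3
      obtain ⟨c₀, ⟨hc0, hcstep⟩, hcend⟩ := ih _ _ hred₁ rfl h2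
      refine ⟨fun n => if n ≤ l₀.length then c₀ n else w', ⟨?_, ?_⟩, ?_⟩
      · simpa using hc0
      · intro i hi
        have hi' : i < l₀.length + 1 := by
          rw [List.length_append, List.length_singleton] at hi; exact hi
        by_cases hil : i < l₀.length
        · have e1 : (if i + 1 ≤ l₀.length then c₀ (i+1) else w') = c₀ (i+1) := by
            by_cases hb : i + 1 ≤ l₀.length
            · rw [if_pos hb]
            · exfalso; omega
          have e2 : (if i ≤ l₀.length then c₀ i else w') = c₀ i := if_pos (by omega)
          have e3 : (l₀ ++ [b]).get ⟨i, hi⟩ = l₀.get ⟨i, hil⟩ := by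
            simp only [List.get_eq_getElem]
            exact List.getElem_append_left hil
          simp only [e1, e2, e3]
          exact hcstep i hil
        · have hieq : i = l₀.length := by omega
          subst hieq
          have e1 : (if l₀.length + 1 ≤ l₀.length then c₀ (l₀.length+1) else w') = w' :=
            if_neg (by omega)
          have e2 : (if l₀.length ≤ l₀.length then c₀ l₀.length else w') = c₀ l₀.length :=
            if_pos le_rfl
          have e3 : (l₀ ++ [b]).get ⟨l₀.length, hi⟩ = b := by
            simp only [List.get_eq_getElem]
            exact List.getElem_concat_length rfl _
          simp only [e1, e2, e3]
          rw [hcend]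
          constructor
          · exact Or.inr (cs.simple_mul_simple_cancel_left b).symm
          · rw [cs.simple_mul_simple_cancel_left]
            exact DeodharAux.bruhatLE_refl cs w'
      · rw [List.length_append, List.length_singleton]
        exact if_neg (by omega)
end

section
/- Let V be a vector space and ω ∈ End(V) a stable operator, i.e. ω restricts to a bijection on im ω and V = ker ω ⊕ im ω. If π is a smooth G-representation on V and ω^∨ is the transpose operator on the smooth dual π^∨, defined by (ω^∨.f)(v) = f(ω.v), then ω^∨ is also stable; moreover im ω^∨ equals the space of smooth linear functionals vanishing on ker ω, and ker ω^∨ equals the space of smooth linear functionals vanishing on im ω. -/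
/-- `v` is a smooth vector: it is fixed by some open compact subgroup of `G`. -/
def IsSmoothVector {G : Type*} [Group G] [TopologicalSpace G] {V : Type*} [AddCommGroup V]
    [Module ℂ V] (ρ : Representation ℂ G V) (v : V) : Prop :=
  ∃ K : Subgroup G, IsOpen (K : Set G) ∧ IsCompact (K : Set G) ∧ ∀ k ∈ K, ρ k v = v

/-- The smooth dual of `(ρ, V)`: linear functionals invariant under some open compact
subgroup of `G` (for the dual action). -/
def smoothDualSet {G : Type*} [Group G] [TopologicalSpace G] {V : Type*} [AddCommGroup V]
    [Module ℂ V] (ρ : Representation ℂ G V) : Set (Module.Dual ℂ V) :=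
  {f | ∃ K : Subgroup G, IsOpen (K : Set G) ∧ IsCompact (K : Set G) ∧
    ∀ k ∈ K, ∀ v : V, f (ρ k v) = f v}

/-- Let `π = (ρ, V)` be a smooth representation of an l-group `G` and `ω` a stable
`G`-endomorphism of `V` (i.e. `V = ker ω ⊕ im ω` with `ω` bijective on `im ω`).  Then the
transpose `ω^∨` on the smooth dual is also stable; moreover the image of `ω^∨` equals the
smooth functionals vanishing on `ker ω`, and the kernel of `ω^∨` equals the smooth
functionals vanishing on `im ω`. -/
theorem dual_stable_of_stable {G : Type*} [Group G] [TopologicalSpace G] [IsTopologicalGroup G]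
    {V : Type*} [AddCommGroup V] [Module ℂ V] (ρ : Representation ℂ G V)
    (hsmooth : ∀ v : V, IsSmoothVector ρ v)
    (ω : V →ₗ[ℂ] V)
    (hequiv : ∀ (g : G) (v : V), ω (ρ g v) = ρ g (ω v))
    (hcompl : IsCompl (LinearMap.ker ω) (LinearMap.range ω))
    (hbij : Set.BijOn ω (LinearMap.range ω : Set V) (LinearMap.range ω : Set V)) :
    (ω.dualMap '' smoothDualSet ρ =
      {f ∈ smoothDualSet ρ | ∀ v ∈ LinearMap.ker ω, f v = 0}) ∧
    ({f ∈ smoothDualSet ρ | ω.dualMap f = 0} =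
      {f ∈ smoothDualSet ρ | ∀ v ∈ LinearMap.range ω, f v = 0}) ∧
    Set.BijOn ω.dualMap (ω.dualMap '' smoothDualSet ρ) (ω.dualMap '' smoothDualSet ρ) ∧
    (∀ f ∈ smoothDualSet ρ, ∃! p : Module.Dual ℂ V × Module.Dual ℂ V,
      p.1 ∈ smoothDualSet ρ ∧ ω.dualMap p.1 = 0 ∧
      p.2 ∈ ω.dualMap '' smoothDualSet ρ ∧ f = p.1 + p.2) := by
  classical
  set Kr := LinearMap.ker ω with hKr
  set Rg := LinearMap.range ω with hRg
  -- the projection onto the image along the kernel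
  set π₀ : V →ₗ[ℂ] Rg := Rg.linearProjOfIsCompl Kr hcompl.symm with hπ₀
  set Pl : V →ₗ[ℂ] V := Rg.subtype ∘ₗ π₀ with hPl
  have hP_mem : ∀ v : V, Pl v ∈ Rg := fun v => (π₀ v).2
  have hP_sub : ∀ v : V, v - Pl v ∈ Kr := by
    intro v
    have h := Submodule.projection_add_projection_eq_self hcompl v
    have h2 : v - Pl v = (Kr.linearProjOfIsCompl Rg hcompl v : V) := by
      rw [sub_eq_iff_eq_add]
      exact h.symm
    rw [h2]; exact (Kr.linearProjOfIsCompl Rg hcompl v).2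
  have hP_range : ∀ v ∈ Rg, Pl v = v := by
    intro v hv
    simp only [hPl, hπ₀, LinearMap.comp_apply, Submodule.subtype_apply]
    rw [show v = ((⟨v, hv⟩ : Rg) : V) from rfl]
    exact congrArg Subtype.val (Submodule.projectionOnto_apply_left hcompl.symm ⟨v, hv⟩)
  have hP_ker : ∀ v ∈ Kr, Pl v = 0 := by
    intro v hv
    simp only [hPl, hπ₀, LinearMap.comp_apply, Submodule.subtype_apply]
    rw [show (Rg.linearProjOfIsCompl Kr hcompl.symm) v = 0 from
      Submodule.projectionOnto_apply_of_mem_right hcompl.symm hv]; rfl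
  -- invariance of kernel and range
  have hRg_inv : ∀ (g : G) (v : V), v ∈ Rg → ρ g v ∈ Rg := by
    rintro g v ⟨u, rfl⟩
    exact ⟨ρ g u, (hequiv g u)⟩
  have hKr_inv : ∀ (g : G) (v : V), v ∈ Kr → ρ g v ∈ Kr := by
    intro g v hv
    have : ω v = 0 := hv
    show ω (ρ g v) = 0
    rw [hequiv g v, this, map_zero]
  -- equivariance of the projection
  have hPequiv : ∀ (g : G) (v : V), Pl (ρ g v) = ρ g (Pl v) := by
    intro g v
    have hdec : ρ g v = ρ g (Pl v) + ρ g (v - Pl v) := by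
      rw [← map_add]; congr 1; abel
    rw [hdec, map_add, hP_range _ (hRg_inv g _ (hP_mem v)), hP_ker _ (hKr_inv g _ (hP_sub v)),
      add_zero]
  -- the inverse of ω on its image
  have hres : ∀ x ∈ Rg, ω x ∈ Rg := fun x _ => LinearMap.mem_range_self ω x
  set ω' : Rg →ₗ[ℂ] Rg := ω.restrict hres with hω'
  have hω'bij : Function.Bijective ω' := by
    constructor
    · rintro ⟨x, hx⟩ ⟨y, hy⟩ hxy
      have : ω x = ω y := congrArg Subtype.val hxy
      exact Subtype.ext (hbij.injOn hx hy this)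
    · rintro ⟨y, hy⟩
      obtain ⟨x, hx, hωx⟩ := hbij.surjOn hy
      exact ⟨⟨x, hx⟩, Subtype.ext hωx⟩
  set e : Rg ≃ₗ[ℂ] Rg := LinearEquiv.ofBijective ω' hω'bij with he
  set σ : V →ₗ[ℂ] V := Rg.subtype ∘ₗ (e.symm : Rg →ₗ[ℂ] Rg) ∘ₗ π₀ with hσ
  have hσ_mem : ∀ v : V, σ v ∈ Rg := fun v => (e.symm (π₀ v)).2
  have hωσ : ∀ v : V, ω (σ v) = Pl v := by
    intro v
    show ω ((e.symm (π₀ v) : Rg) : V) = ((π₀ v : Rg) : V)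
    have h1 : ω ((e.symm (π₀ v) : Rg) : V) = ((e (e.symm (π₀ v)) : Rg) : V) := rfl
    rw [h1, e.apply_symm_apply]
  have hσω : ∀ v : V, σ (ω v) = Pl v := by
    intro v
    refine hbij.injOn (hσ_mem _) (hP_mem _) ?_
    rw [hωσ, hP_range _ (LinearMap.mem_range_self ω v)]
    have : ω v = ω (Pl v) := by
      have h := hP_sub v
      have : ω (v - Pl v) = 0 := h
      rw [map_sub] at this
      exact sub_eq_zero.mp this
    exact this
  have hσequiv : ∀ (g : G) (v : V), σ (ρ g v) = ρ g (σ v) := by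
    intro g v
    refine hbij.injOn (hσ_mem _) (hRg_inv g _ (hσ_mem v)) ?_
    rw [hωσ, hPequiv, hequiv, hωσ]
  have hσ_ker : ∀ v ∈ Kr, σ v = 0 := by
    intro v hv
    refine hbij.injOn (hσ_mem v) (Submodule.zero_mem Rg) ?_
    rw [hωσ, hP_ker _ hv, map_zero]
  -- smoothness transfers along equivariant maps
  have hsm_comp : ∀ (τ : V →ₗ[ℂ] V), (∀ (g : G) (v : V), τ (ρ g v) = ρ g (τ v)) →
      ∀ f ∈ smoothDualSet ρ, f ∘ₗ τ ∈ smoothDualSet ρ := by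
    rintro τ hτ f ⟨K, hKo, hKc, hKf⟩
    exact ⟨K, hKo, hKc, fun k hk v => by
      simp only [LinearMap.comp_apply]; rw [hτ, hKf k hk]⟩
  -- first statement
  have h1 : ω.dualMap '' smoothDualSet ρ =
      {f ∈ smoothDualSet ρ | ∀ v ∈ LinearMap.ker ω, f v = 0} := by
    ext f
    constructor
    · rintro ⟨g, hg, rfl⟩
      refine ⟨hsm_comp ω hequiv g hg, fun v hv => ?_⟩
      show g (ω v) = 0
      rw [show ω v = 0 from hv, map_zero]
    · rintro ⟨hf, hf0⟩
      refine ⟨f ∘ₗ σ, hsm_comp σ hσequiv f hf, ?_⟩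
      ext v
      show f (σ (ω v)) = f v
      rw [hσω]
      have := hf0 _ (hP_sub v)
      rw [map_sub] at this
      exact (sub_eq_zero.mp this).symm
  refine ⟨h1, ?_, ?_, ?_⟩
  -- second statement
  · ext f
    simp only [Set.mem_setOf_eq, and_congr_right_iff]
    intro hf
    constructor
    · rintro h v ⟨u, rfl⟩
      show (ω.dualMap f) u = 0
      rw [h]; rfl
    · intro h
      ext u
      exact h (ω u) (LinearMap.mem_range_self ω u)
  -- bijectivity on the image
  · have hdm : ∀ (g : Module.Dual ℂ V), ω.dualMap g = g ∘ₗ ω := fun g => rfl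
    have hmem_iff : ∀ f, f ∈ ω.dualMap '' smoothDualSet ρ ↔
        (f ∈ smoothDualSet ρ ∧ ∀ v ∈ Kr, f v = 0) := by
      intro f; rw [h1]; rfl
    refine ⟨?_, ?_, ?_⟩
    · -- MapsTo
      intro f hf
      obtain ⟨hfsm, -⟩ := (hmem_iff f).1 hf
      exact ⟨f, hfsm, rfl⟩
    · -- InjOn
      intro f hf g hg hfg
      obtain ⟨hfsm, hf0⟩ := (hmem_iff f).1 hf
      obtain ⟨hgsm, hg0⟩ := (hmem_iff g).1 hg
      ext v
      have hrange : ∀ w ∈ Rg, f w = g w := by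
        rintro w ⟨u, rfl⟩
        have := congrArg (fun φ : Module.Dual ℂ V => φ u) hfg
        exact this
      have h2 : f (v - Pl v) = 0 := hf0 _ (hP_sub v)
      have h3 : g (v - Pl v) = 0 := hg0 _ (hP_sub v)
      rw [map_sub] at h2 h3
      have h4 := hrange _ (hP_mem v)
      linear_combination h2 - h3 + h4
    · -- SurjOn
      intro f hf
      obtain ⟨hfsm, hf0⟩ := (hmem_iff f).1 hf
      refine ⟨f ∘ₗ σ, ?_, ?_⟩
      · refine (hmem_iff _).2 ⟨hsm_comp σ hσequiv f hfsm, fun v hv => ?_⟩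
        show f (σ v) = 0
        rw [hσ_ker v hv, map_zero]
      · ext v
        show f (σ (ω v)) = f v
        rw [hσω]
        have := hf0 _ (hP_sub v)
        rw [map_sub] at this
        exact (sub_eq_zero.mp this).symm
  -- unique decomposition
  · intro f hf
    refine ⟨(f - f ∘ₗ Pl, f ∘ₗ Pl), ⟨?_, ?_, ?_, by show f = (f - f ∘ₗ Pl) + f ∘ₗ Pl; abel⟩, ?_⟩
    · -- f - f ∘ Pl is smooth
      obtain ⟨K, hKo, hKc, hKf⟩ := hf
      exact ⟨K, hKo, hKc, fun k hk v => by
        simp only [LinearMap.sub_apply, LinearMap.comp_apply]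
        rw [hKf k hk v, hPequiv, hKf k hk]⟩
    · -- it is killed by the transpose
      ext v
      show (f - f ∘ₗ Pl) (ω v) = 0
      simp only [LinearMap.sub_apply, LinearMap.comp_apply]
      rw [hP_range _ (LinearMap.mem_range_self ω v), sub_self]
    · -- f ∘ Pl is in the image of the smooth dual
      refine ⟨f ∘ₗ σ, hsm_comp σ hσequiv f hf, ?_⟩
      ext v
      show f (σ (ω v)) = f (Pl v)
      rw [hσω]
    · -- uniqueness
      rintro ⟨q1, q2⟩ ⟨hq1sm, hq1ω, ⟨g, hgsm, rfl⟩, hsum⟩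
      have hq1Rg : ∀ v ∈ Rg, q1 v = 0 := by
        rintro v ⟨u, rfl⟩
        have := congrArg (fun φ : Module.Dual ℂ V => φ u) hq1ω
        exact this
      have hq2Kr : ∀ v ∈ Kr, (ω.dualMap g) v = 0 := by
        intro v hv
        show g (ω v) = 0
        rw [show ω v = 0 from hv, map_zero]
      have hq2 : ω.dualMap g = f ∘ₗ Pl := by
        ext v
        have h2 : (ω.dualMap g) (v - Pl v) = 0 := hq2Kr _ (hP_sub v)
        rw [map_sub] at h2
        have h3 : f (Pl v) = q1 (Pl v) + (ω.dualMap g) (Pl v) := by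
          rw [hsum]; rfl
        have h4 : q1 (Pl v) = 0 := hq1Rg _ (hP_mem v)
        show (ω.dualMap g) v = f (Pl v)
        linear_combination h2 - h3 - h4
      have hq1 : q1 = f - f ∘ₗ Pl := by
        have hf2 : f = q1 + f ∘ₗ Pl := by rw [← hq2]; exact hsum
        rw [eq_sub_iff_add_eq]; exact hf2.symm
      simp only [Prod.mk.injEq]
      exact ⟨hq1, hq2⟩
end
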